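/- arXiv:2509.11064 — 11 statements merged into one kernel-verified Lean document; each statement's English description precedes it below -/
import Mathlib

section
/- Let m > 0, v ∈ ℝ³, v⁰ = √(m² + ‖v‖²), v̂ = v/v⁰, and let ω ∈ ℝ³ be a unit vector. Then the norm of the vector (1 − ‖v̂‖²)(v̂ + ω)/(1 + v̂·ω)² is at most 2√(m² + ‖v‖²)/m, i.e. (1 − ‖v̂‖²)·‖v̂ + ω‖/(1 + v̂·ω)² ≤ 2 v⁰/m. -/
noncomputable section

local notation "⟪" x ", " y "⟫" => @inner ℝ _ _ x y

lemma electric_T_poly_bound (u c : ℝ) :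
    (1-u^2)^3*(u^2+2*c+1) ≤ 4*(1+c)^4 := by
  nlinarith [mul_nonneg (sq_nonneg (2*(1-u^2)-3*(1+c)))
      (by positivity : (0:ℝ) ≤ (2*(1-u^2)+(1+c))^2+2*(1+c)^2),
    sq_nonneg ((1+c)^2)]

/-- With `v⁰ = √(m² + ‖v‖²)`, `v̂ = v/v⁰` and `ω` a unit vector, the kernel of
the electric-field T-term satisfies `(1 − ‖v̂‖²)·‖v̂ + ω‖/(1 + v̂·ω)² ≤ 2 v⁰/m`. -/
theorem electric_T_kernel_bound
    (m : ℝ) (hm : 0 < m) (v ω : EuclideanSpace ℝ (Fin 3)) (hω : ‖ω‖ = 1)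
    (v0 : ℝ) (hv0 : v0 = Real.sqrt (m ^ 2 + ‖v‖ ^ 2))
    (vhat : EuclideanSpace ℝ (Fin 3)) (hvhat : vhat = v0⁻¹ • v) :
    (1 - ‖vhat‖ ^ 2) * ‖vhat + ω‖ / (1 + ⟪vhat, ω⟫) ^ 2 ≤ 2 * v0 / m := by
  set u : ℝ := ‖vhat‖ with hu
  set c : ℝ := ⟪vhat, ω⟫ with hcdef
  set N : ℝ := ‖vhat + ω‖ with hN
  have hv0pos : 0 < v0 := by
    rw [hv0]; exact Real.sqrt_pos.2 (by positivity)
  have hv02 : v0 ^ 2 = m ^ 2 + ‖v‖ ^ 2 := by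
    rw [hv0]; exact Real.sq_sqrt (by positivity)
  have hunorm : u = ‖v‖ / v0 := by
    rw [hu, hvhat, norm_smul, norm_inv, Real.norm_eq_abs, abs_of_pos hv0pos,
      inv_mul_eq_div]
  have hp : 1 - u ^ 2 = m ^ 2 / v0 ^ 2 := by
    rw [hunorm, div_pow]
    field_simp
    linarith [hv02]
  have hppos : 0 < 1 - u ^ 2 := by
    rw [hp]; positivity
  have hu1 : u < 1 := by
    nlinarith [norm_nonneg vhat]
  have hcabs : |c| ≤ u := by
    have := abs_real_inner_le_norm vhat ω
    rwa [hω, mul_one] at this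
  have hD : 0 < 1 + c := by
    have := abs_le.1 hcabs
    linarith
  have hN2 : N ^ 2 = u ^ 2 + 2 * c + 1 := by
    rw [hN, hu, hcdef, norm_add_sq_real, hω]
    ring
  have hpm : (1 - u ^ 2) * v0 ^ 2 = m ^ 2 := by
    rw [hp]; field_simp
  have key2 : (1 - u ^ 2) ^ 2 * N ^ 2 * m ^ 2 ≤ 4 * (1 + c) ^ 4 * v0 ^ 2 := by
    have h1 := mul_le_mul_of_nonneg_right (electric_T_poly_bound u c) (sq_nonneg v0)
    have e : (1 - u ^ 2) ^ 2 * N ^ 2 * m ^ 2 = ((1 - u ^ 2) ^ 3 * (u ^ 2 + 2 * c + 1)) * v0 ^ 2 := by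
      rw [← hpm, hN2]; ring
    linarith
  rw [div_le_iff₀ (by positivity)]
  have habsq : ((1 - u ^ 2) * N) ^ 2 ≤ (2 * v0 / m * (1 + c) ^ 2) ^ 2 := by
    have e1 : (2 * v0 / m * (1 + c) ^ 2) ^ 2 = 4 * (1 + c) ^ 4 * v0 ^ 2 / m ^ 2 := by
      field_simp; ring
    rw [e1, le_div_iff₀ (by positivity : (0:ℝ) < m ^ 2)]
    calc ((1 - u ^ 2) * N) ^ 2 * m ^ 2 = (1 - u ^ 2) ^ 2 * N ^ 2 * m ^ 2 := by ring
      _ ≤ 4 * (1 + c) ^ 4 * v0 ^ 2 := key2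
  have ha : 0 ≤ (1 - u ^ 2) * N := mul_nonneg hppos.le (norm_nonneg _)
  have hb : 0 ≤ 2 * v0 / m * (1 + c) ^ 2 := by positivity
  calc (1 - u ^ 2) * N = Real.sqrt (((1 - u ^ 2) * N) ^ 2) := (Real.sqrt_sq ha).symm
    _ ≤ Real.sqrt ((2 * v0 / m * (1 + c) ^ 2) ^ 2) := Real.sqrt_le_sqrt habsq
    _ = 2 * v0 / m * (1 + c) ^ 2 := Real.sqrt_sq hb
end
end

section
/- Let m > 0, v ∈ ℝ³, v⁰ = √(m² + ‖v‖²), v̂ = v/v⁰, and let ω ∈ ℝ³ be a unit vector. Then ‖ω × v̂‖/(1 + v̂·ω) ≤ ‖v‖/m; equivalently, m·‖ω × v̂‖ ≤ ‖v‖·(1 + v̂·ω). -/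
noncomputable section

local notation "⟪" x ", " y "⟫" => @inner ℝ _ _ x y

/-- The cross product on `ℝ³` (Euclidean). -/
noncomputable def cross3 (a b : EuclideanSpace ℝ (Fin 3)) : EuclideanSpace ℝ (Fin 3) :=
  (WithLp.equiv 2 (Fin 3 → ℝ)).symm
    ![a 1 * b 2 - a 2 * b 1, a 2 * b 0 - a 0 * b 2, a 0 * b 1 - a 1 * b 0]

lemma cross3_norm_sq (a b : EuclideanSpace ℝ (Fin 3)) :
    ‖cross3 a b‖ ^ 2 = ‖a‖ ^ 2 * ‖b‖ ^ 2 - ⟪a, b⟫ ^ 2 := by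
  have h1 : ‖cross3 a b‖ ^ 2 = ⟪cross3 a b, cross3 a b⟫ := (real_inner_self_eq_norm_sq _).symm
  have h2 : ‖a‖ ^ 2 = ⟪a, a⟫ := (real_inner_self_eq_norm_sq _).symm
  have h3 : ‖b‖ ^ 2 = ⟪b, b⟫ := (real_inner_self_eq_norm_sq _).symm
  rw [h1, h2, h3]
  simp only [PiLp.inner_apply, RCLike.inner_apply, conj_trivial, Fin.sum_univ_three, cross3,
    WithLp.equiv_symm_apply, PiLp.toLp_apply, Matrix.cons_val_zero, Matrix.cons_val_one, Matrix.head_cons,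
    Matrix.cons_val_two, Matrix.tail_cons]
  ring

set_option maxHeartbeats 800000 in
/-- With `v⁰ = √(m² + ‖v‖²)`, `v̂ = v/v⁰` and `ω` a unit vector,
`‖ω × v̂‖/(1 + v̂·ω) ≤ ‖v‖/m`; equivalently `m·‖ω × v̂‖ ≤ ‖v‖·(1 + v̂·ω)`. -/
theorem cross_kernel_bound
    (m : ℝ) (hm : 0 < m) (v ω : EuclideanSpace ℝ (Fin 3)) (hω : ‖ω‖ = 1)
    (v0 : ℝ) (hv0 : v0 = Real.sqrt (m ^ 2 + ‖v‖ ^ 2))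
    (vhat : EuclideanSpace ℝ (Fin 3)) (hvhat : vhat = v0⁻¹ • v) :
    ‖cross3 ω vhat‖ / (1 + ⟪vhat, ω⟫) ≤ ‖v‖ / m ∧
      m * ‖cross3 ω vhat‖ ≤ ‖v‖ * (1 + ⟪vhat, ω⟫) := by
  set V := ‖v‖ with hV
  have hVnn : 0 ≤ V := norm_nonneg v
  have hv0pos : 0 < v0 := by
    rw [hv0]; exact Real.sqrt_pos.2 (by positivity)
  have hv0sq : v0 ^ 2 = m ^ 2 + V ^ 2 := by
    rw [hv0]; exact Real.sq_sqrt (by positivity)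
  have hVv0 : V < v0 := by nlinarith
  set C := ⟪v, ω⟫ with hCdef
  have hC : |C| ≤ V := by
    have := abs_real_inner_le_norm v ω
    rwa [hω, mul_one] at this
  have hc : ⟪vhat, ω⟫ = v0⁻¹ * C := by
    rw [hvhat, real_inner_smul_left]
  have hcn : ‖vhat‖ = v0⁻¹ * V := by
    rw [hvhat, norm_smul, Real.norm_eq_abs, abs_of_pos (by positivity)]
  set N := ‖cross3 ω vhat‖ with hNdef
  have hNnn : 0 ≤ N := norm_nonneg _
  have hN2 : N ^ 2 = ‖ω‖ ^ 2 * ‖vhat‖ ^ 2 - ⟪ω, vhat⟫ ^ 2 := cross3_norm_sq ω vhat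
  rw [hω, hcn, real_inner_comm, hc, one_pow, one_mul] at hN2
  have hv0ne : v0 ≠ 0 := ne_of_gt hv0pos
  have hN2' : N ^ 2 * v0 ^ 2 = V ^ 2 - C ^ 2 := by
    rw [hN2]; field_simp
  have hC2 : C ^ 2 ≤ V ^ 2 := by nlinarith [abs_nonneg C, sq_abs C]
  have h1c : 0 < 1 + v0⁻¹ * C := by
    have : -V ≤ C := neg_le_of_abs_le hC
    have h2 : -v0 < C := by linarith
    have : -1 < v0⁻¹ * C := by
      have h3 : v0⁻¹ * (-C) < v0⁻¹ * v0 :=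
        mul_lt_mul_of_pos_left (by linarith) (by positivity)
      rw [inv_mul_cancel₀ hv0ne] at h3
      nlinarith
    linarith
  have key : m * N ≤ V * (1 + v0⁻¹ * C) := by
    have hm2 : m ^ 2 = v0 ^ 2 - V ^ 2 := by linarith
    have hexp : (V * (1 + v0⁻¹ * C)) ^ 2 * v0 ^ 2 = V ^ 2 * (v0 + C) ^ 2 := by
      field_simp
    have hA : (m * N) ^ 2 * v0 ^ 2 = m ^ 2 * (V ^ 2 - C ^ 2) := by
      calc (m * N) ^ 2 * v0 ^ 2 = m ^ 2 * (N ^ 2 * v0 ^ 2) := by ring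
      _ = m ^ 2 * (V ^ 2 - C ^ 2) := by rw [hN2']
    have hgap : V ^ 2 * (v0 + C) ^ 2 - m ^ 2 * (V ^ 2 - C ^ 2) = (V ^ 2 + C * v0) ^ 2 := by
      rw [hm2]; ring
    have hB : (m * N) ^ 2 * v0 ^ 2 ≤ (V * (1 + v0⁻¹ * C)) ^ 2 * v0 ^ 2 := by
      rw [hA, hexp]; nlinarith [sq_nonneg (V ^ 2 + C * v0)]
    have hsq : (m * N) ^ 2 ≤ (V * (1 + v0⁻¹ * C)) ^ 2 :=
      le_of_mul_le_mul_right hB (by positivity)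
    exact (pow_le_pow_iff_left₀ (mul_nonneg hm.le hNnn) (mul_nonneg hVnn h1c.le)
      two_ne_zero).mp hsq
  rw [hc]
  refine ⟨?_, key⟩
  rw [div_le_div_iff₀ h1c hm]
  linarith [key, mul_comm N m]
end
end

section
/- Let m > 0, v ∈ ℝ³, v⁰ = √(m² + ‖v‖²), v̂ = v/v⁰, and let ω ∈ ℝ³ be a unit vector. Then (1 − ‖v̂‖²)·‖ω × v̂‖/(1 + v̂·ω)² ≤ 2‖v‖/m; in particular it is at most 2√(m² + ‖v‖²)/m. -/
noncomputable section

local notation "⟪" x ", " y "⟫" => @inner ℝ _ _ x y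

lemma aux_key_poly (s c : ℝ) (hs0 : 0 ≤ s) (hs1 : s < 1) (h1 : -s ≤ c) (h2 : c ≤ s) :
    (1-s^2)^3*(s^2-c^2) ≤ 4*s^2*(1+c)^4 := by
  have hc1 : (0:ℝ) < 1 + c := by linarith
  have h1s : 1 - s ≤ 1 + c := by linarith
  have hsc : (0:ℝ) ≤ s + c := by linarith
  have hsc' : (0:ℝ) ≤ s - c := by linarith
  have hcs : c^2 ≤ s^2 := by nlinarith
  rcases le_or_gt s (1/3) with hs | hs
  · have k1 : (1+s)^3 ≤ 4*(1-s) := by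
      nlinarith [mul_nonneg hs0 (by linarith : (0:ℝ) ≤ 1/3 - s),
        mul_nonneg (mul_nonneg hs0 hs0) (by linarith : (0:ℝ) ≤ 1/3 - s)]
    have k2 : (1-s)^4 ≤ (1+c)^4 := pow_le_pow_left₀ (by linarith) h1s 4
    calc (1-s^2)^3*(s^2-c^2) = (1-s)^3 * ((1+s)^3*(s^2-c^2)) := by ring
      _ ≤ (1-s)^3 * (4*(1-s)*s^2) := by
          apply mul_le_mul_of_nonneg_left _ (pow_nonneg (by linarith) 3)
          calc (1+s)^3*(s^2-c^2) ≤ (1+s)^3*s^2 := by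
                apply mul_le_mul_of_nonneg_left (by nlinarith) (by positivity)
            _ ≤ (4*(1-s))*s^2 := by
                apply mul_le_mul_of_nonneg_right k1 (sq_nonneg s)
      _ = 4*s^2*(1-s)^4 := by ring
      _ ≤ 4*s^2*(1+c)^4 := by
          apply mul_le_mul_of_nonneg_left k2 (by positivity)
  · have k1 : (1+s)^3 ≤ 8*s := by
      nlinarith [mul_nonneg (by linarith : (0:ℝ) ≤ 1-s)
        (by nlinarith : (0:ℝ) ≤ s^2+4*s-1)]
    have k3 : 4*(1-s)*(s+c) ≤ (1+c)^2 := by nlinarith [sq_nonneg (1-2*s-c)]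
    have k4 : (1-s)^2 ≤ (1+c)^2 := by nlinarith
    have k5 : 4*(1-s)^3*(s+c) ≤ (1+c)^4 := by
      calc 4*(1-s)^3*(s+c) = (4*(1-s)*(s+c))*(1-s)^2 := by ring
        _ ≤ (1+c)^2*(1+c)^2 := mul_le_mul k3 k4 (sq_nonneg _) (by positivity)
        _ = (1+c)^4 := by ring
    have hx : (0:ℝ) ≤ (1-s)^3*(s+c) := mul_nonneg (pow_nonneg (by linarith) 3) hsc
    calc (1-s^2)^3*(s^2-c^2) = (1+s)^3 * ((1-s)^3*(s+c)*(s-c)) := by ring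
      _ ≤ (8*s) * ((1-s)^3*(s+c)*(s-c)) := by
          apply mul_le_mul_of_nonneg_right k1 (mul_nonneg hx hsc')
      _ ≤ (8*s) * ((1-s)^3*(s+c)*(2*s)) := by
          apply mul_le_mul_of_nonneg_left _ (by linarith)
          apply mul_le_mul_of_nonneg_left (by linarith) hx
      _ = (4*(1-s)^3*(s+c)) * (4*s^2) := by ring
      _ ≤ (1+c)^4 * (4*s^2) := mul_le_mul_of_nonneg_right k5 (by positivity)
      _ = 4*s^2*(1+c)^4 := by ring

lemma aux_norm_sq_eq3 (x : EuclideanSpace ℝ (Fin 3)) : ‖x‖^2 = x 0^2 + x 1^2 + x 2^2 := by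
  rw [EuclideanSpace.norm_eq, Real.sq_sqrt (by positivity)]
  simp [Fin.sum_univ_three, sq_abs]

lemma aux_inner_eq3 (x y : EuclideanSpace ℝ (Fin 3)) :
    ⟪x, y⟫ = x 0 * y 0 + x 1 * y 1 + x 2 * y 2 := by
  simp [PiLp.inner_apply, Fin.sum_univ_three, mul_comm]

lemma aux_cross3_norm_sq (a b : EuclideanSpace ℝ (Fin 3)) :
    ‖cross3 a b‖^2 = ‖a‖^2 * ‖b‖^2 - ⟪a, b⟫^2 := by
  rw [aux_norm_sq_eq3, aux_norm_sq_eq3, aux_norm_sq_eq3, aux_inner_eq3]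
  simp only [cross3, WithLp.equiv_symm_apply, PiLp.toLp_apply]
  simp [Matrix.cons_val_zero, Matrix.cons_val_one]
  ring

/-- With `v⁰ = √(m² + ‖v‖²)`, `v̂ = v/v⁰` and `ω` a unit vector, the kernel of
the magnetic-field T-term satisfies `(1 − ‖v̂‖²)·‖ω × v̂‖/(1 + v̂·ω)² ≤ 2‖v‖/m`; in
particular it is at most `2√(m² + ‖v‖²)/m`. -/
theorem magnetic_T_kernel_bound
    (m : ℝ) (hm : 0 < m) (v ω : EuclideanSpace ℝ (Fin 3)) (hω : ‖ω‖ = 1)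
    (v0 : ℝ) (hv0 : v0 = Real.sqrt (m ^ 2 + ‖v‖ ^ 2))
    (vhat : EuclideanSpace ℝ (Fin 3)) (hvhat : vhat = v0⁻¹ • v) :
    (1 - ‖vhat‖ ^ 2) * ‖cross3 ω vhat‖ / (1 + ⟪vhat, ω⟫) ^ 2 ≤ 2 * ‖v‖ / m ∧
      (1 - ‖vhat‖ ^ 2) * ‖cross3 ω vhat‖ / (1 + ⟪vhat, ω⟫) ^ 2 ≤
        2 * Real.sqrt (m ^ 2 + ‖v‖ ^ 2) / m := by
  set s : ℝ := ‖vhat‖ with hsdef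
  set c : ℝ := ⟪vhat, ω⟫ with hcdef
  have hv0pos : 0 < v0 := by
    rw [hv0]; exact Real.sqrt_pos.2 (by positivity)
  have hv0sq : v0^2 = m^2 + ‖v‖^2 := by
    rw [hv0]; exact Real.sq_sqrt (by positivity)
  have hs0 : 0 ≤ s := norm_nonneg _
  have hnv : ‖v‖ = s * v0 := by
    rw [hsdef, hvhat, norm_smul, norm_inv, Real.norm_eq_abs, abs_of_pos hv0pos]
    field_simp
  have hs1 : s < 1 := by
    by_contra h
    push_neg at h
    have h2 : v0 ≤ ‖v‖ := by
      rw [hnv]; exact le_mul_of_one_le_left hv0pos.le h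
    have h3 : v0^2 ≤ ‖v‖^2 := pow_le_pow_left₀ hv0pos.le h2 2
    nlinarith
  have hcabs : |c| ≤ s := by
    have := abs_real_inner_le_norm vhat ω
    rwa [hω, mul_one] at this
  have hc2 : c ≤ s := (abs_le.1 hcabs).2
  have hc1' : -s ≤ c := (abs_le.1 hcabs).1
  have hc1 : (0:ℝ) < 1 + c := by linarith
  have hN : ‖cross3 ω vhat‖^2 = s^2 - c^2 := by
    rw [aux_cross3_norm_sq, hω, hcdef, hsdef, real_inner_comm vhat ω]
    ring
  have hmm : (1 - s^2) * v0^2 = m^2 := by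
    have h1 : ‖v‖^2 = s^2 * v0^2 := by rw [hnv]; ring
    nlinarith
  have hkey := aux_key_poly s c hs0 hs1 hc1' hc2
  -- main squared inequality
  have hfin : ((1-s^2) * ‖cross3 ω vhat‖ * m)^2 ≤ (2*‖v‖*(1+c)^2)^2 := by
    have e1 : ((1-s^2) * ‖cross3 ω vhat‖ * m)^2
        = ((1-s^2)^3*(s^2-c^2)) * v0^2 := by
      rw [mul_pow, mul_pow, hN, ← hmm]; ring
    have e2 : (2*‖v‖*(1+c)^2)^2 = (4*s^2*(1+c)^4) * v0^2 := by
      rw [hnv]; ring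
    rw [e1, e2]
    exact mul_le_mul_of_nonneg_right hkey (sq_nonneg v0)
  have hmain : (1 - s ^ 2) * ‖cross3 ω vhat‖ / (1 + c) ^ 2 ≤ 2 * ‖v‖ / m := by
    rw [div_le_div_iff₀ (by positivity) hm]
    have hLnn : 0 ≤ (1-s^2) * ‖cross3 ω vhat‖ * m :=
      mul_nonneg (mul_nonneg (by nlinarith) (norm_nonneg _)) hm.le
    have hRnn : 0 ≤ 2*‖v‖*(1+c)^2 := by positivity
    have := Real.sqrt_le_sqrt hfin
    rwa [Real.sqrt_sq hLnn, Real.sqrt_sq hRnn] at this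
  refine ⟨hmain, hmain.trans ?_⟩
  have hle : ‖v‖ ≤ Real.sqrt (m ^ 2 + ‖v‖ ^ 2) := by
    rw [← hv0, hnv]
    nlinarith
  gcongr
end
end

section
/- Let m > 0, v ∈ ℝ³, v⁰ = √(m² + ‖v‖²), v̂ = v/v⁰, let ω ∈ ℝ³ be a unit vector, and let e₃ = (0,0,1). Then ‖e₃ − (v̂₃/(1 + v̂·ω))·(ω + v̂)‖ ≤ 1 + |v̂₃|·√(m² + ‖v‖²)/m, where v̂₃ is the third component of v̂. -/
noncomputable section

local notation "⟪" x ", " y "⟫" => @inner ℝ _ _ x y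

/-- With `v⁰ = √(m² + ‖v‖²)`, `v̂ = v/v⁰`, `ω` a unit vector and
`e₃ = (0,0,1)`, the kernel of the boundary (b2) contribution satisfies
`‖e₃ − (v̂₃/(1 + v̂·ω))·(ω + v̂)‖ ≤ 1 + |v̂₃|·√(m² + ‖v‖²)/m`. -/
theorem b2_kernel_bound
    (m : ℝ) (hm : 0 < m) (v ω : EuclideanSpace ℝ (Fin 3)) (hω : ‖ω‖ = 1)
    (v0 : ℝ) (hv0 : v0 = Real.sqrt (m ^ 2 + ‖v‖ ^ 2))
    (vhat : EuclideanSpace ℝ (Fin 3)) (hvhat : vhat = v0⁻¹ • v) :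
    ‖EuclideanSpace.single (2 : Fin 3) (1 : ℝ) -
        (vhat 2 / (1 + ⟪vhat, ω⟫)) • (ω + vhat)‖ ≤
      1 + |vhat 2| * Real.sqrt (m ^ 2 + ‖v‖ ^ 2) / m := by
  have hpos : (0:ℝ) < m ^ 2 + ‖v‖ ^ 2 := by positivity
  have hv0pos : 0 < v0 := hv0 ▸ Real.sqrt_pos.mpr hpos
  have hv0sq : v0 ^ 2 = m ^ 2 + ‖v‖ ^ 2 := by
    rw [hv0, Real.sq_sqrt hpos.le]
  have hvn : ‖vhat‖ = ‖v‖ / v0 := by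
    rw [hvhat, norm_smul, norm_inv, Real.norm_eq_abs, abs_of_pos hv0pos]
    ring
  have hvv : ‖v‖ = ‖vhat‖ * v0 := by
    rw [hvn]; field_simp
  have ha1 : ‖vhat‖ < 1 := by
    rw [hvn, div_lt_one hv0pos]
    nlinarith [norm_nonneg v]
  set s : ℝ := ⟪vhat, ω⟫ with hsdef
  have hsle : |s| ≤ ‖vhat‖ := by
    have := abs_real_inner_le_norm vhat ω
    rwa [hω, mul_one] at this
  have hs : 0 < 1 + s := by
    have := abs_le.mp hsle
    linarith [this.1]
  have hexp : ‖ω + vhat‖ ^ 2 = 1 + 2 * s + ‖vhat‖ ^ 2 := by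
    rw [norm_add_sq_real, hω, real_inner_comm, ← hsdef]; ring
  -- key squared inequality
  have hkey : m * ‖ω + vhat‖ ≤ (1 + s) * v0 := by
    have hsq : (m * ‖ω + vhat‖) ^ 2 ≤ ((1 + s) * v0) ^ 2 := by
      have hv2 : ‖v‖ ^ 2 = ‖vhat‖ ^ 2 * v0 ^ 2 := by rw [hvv]; ring
      have hm2 : m ^ 2 = v0 ^ 2 * (1 - ‖vhat‖ ^ 2) := by nlinarith [hv0sq, hv2]
      nlinarith [mul_nonneg (sq_nonneg (s + ‖vhat‖ ^ 2)) (sq_nonneg v0), hexp]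
    nlinarith [mul_nonneg hm.le (norm_nonneg (ω + vhat)),
      mul_pos hs hv0pos, hsq]
  have htri : ‖EuclideanSpace.single (2 : Fin 3) (1 : ℝ) -
        (vhat 2 / (1 + s)) • (ω + vhat)‖ ≤
      1 + |vhat 2| / (1 + s) * ‖ω + vhat‖ := by
    calc _ ≤ ‖EuclideanSpace.single (2 : Fin 3) (1 : ℝ)‖ +
          ‖(vhat 2 / (1 + s)) • (ω + vhat)‖ := norm_sub_le _ _
      _ = 1 + |vhat 2| / (1 + s) * ‖ω + vhat‖ := by
          rw [norm_smul, EuclideanSpace.norm_single, Real.norm_eq_abs,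
            Real.norm_eq_abs, abs_of_pos (by norm_num : (0:ℝ) < 1),
            abs_div, abs_of_pos hs]
  have hbound : |vhat 2| / (1 + s) * ‖ω + vhat‖ ≤ |vhat 2| * v0 / m := by
    rw [div_mul_eq_mul_div, mul_div_assoc, mul_div_assoc]
    apply mul_le_mul_of_nonneg_left _ (abs_nonneg _)
    rw [div_le_div_iff₀ hs hm]
    nlinarith [hkey]
  have := htri.trans (by linarith : 1 + |vhat 2| / (1 + s) * ‖ω + vhat‖ ≤
      1 + |vhat 2| * v0 / m)
  rwa [← hv0]
end
end

section
/- Let m > 0, v ∈ ℝ³, v⁰ = √(m² + ‖v‖²), v̂ = v/v⁰, and let ω ∈ ℝ³ be a unit vector. Then ‖ω − (ω·v̂)v̂‖ ≤ 3(1 + v̂·ω)·√(m² + ‖v‖²)/m; equivalently, ‖ω − (ω·v̂)v̂‖/(1 + v̂·ω) ≤ 3 v⁰/m. -/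
noncomputable section

local notation "⟪" x ", " y "⟫" => @inner ℝ _ _ x y

/-- With `v⁰ = √(m² + ‖v‖²)`, `v̂ = v/v⁰` and `ω` a unit vector, the
projection of `ω` off the `v̂` direction satisfies
`‖ω − (ω·v̂)v̂‖ ≤ 3(1 + v̂·ω)·√(m² + ‖v‖²)/m`; equivalently
`‖ω − (ω·v̂)v̂‖/(1 + v̂·ω) ≤ 3 v⁰/m`. -/
theorem projection_kernel_bound
    (m : ℝ) (hm : 0 < m) (v ω : EuclideanSpace ℝ (Fin 3)) (hω : ‖ω‖ = 1)
    (v0 : ℝ) (hv0 : v0 = Real.sqrt (m ^ 2 + ‖v‖ ^ 2))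
    (vhat : EuclideanSpace ℝ (Fin 3)) (hvhat : vhat = v0⁻¹ • v) :
    ‖ω - ⟪ω, vhat⟫ • vhat‖ ≤ 3 * (1 + ⟪vhat, ω⟫) * Real.sqrt (m ^ 2 + ‖v‖ ^ 2) / m ∧
      ‖ω - ⟪ω, vhat⟫ • vhat‖ / (1 + ⟪vhat, ω⟫) ≤ 3 * v0 / m := by
  have hv0pos : 0 < v0 := by
    rw [hv0]; exact Real.sqrt_pos.mpr (by positivity)
  have hv0sq : v0 ^ 2 = m ^ 2 + ‖v‖ ^ 2 := by
    rw [hv0]; exact Real.sq_sqrt (by positivity)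
  set c : ℝ := ⟪ω, vhat⟫ with hc
  have hsym : ⟪vhat, ω⟫ = c := real_inner_comm _ _
  have hnv : ‖vhat‖ ^ 2 = ‖v‖ ^ 2 / v0 ^ 2 := by
    rw [hvhat, norm_smul, norm_inv, Real.norm_eq_abs, abs_of_pos hv0pos]
    field_simp
  have hnv2 : ‖vhat‖ ^ 2 * v0 ^ 2 = ‖v‖ ^ 2 := by
    rw [hnv]; field_simp
  have hm2 : m ^ 2 = v0 ^ 2 - ‖vhat‖ ^ 2 * v0 ^ 2 := by linarith
  have hnvsq : ‖vhat‖ ^ 2 ≤ 1 := by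
    nlinarith [sq_nonneg m, mul_pos hv0pos hv0pos]
  have hnvle : ‖vhat‖ ≤ 1 := by
    have := (sq_le_one_iff_abs_le_one _).mp hnvsq
    rwa [abs_of_nonneg (norm_nonneg _)] at this
  have habs : |c| ≤ ‖vhat‖ := by
    calc |c| ≤ ‖ω‖ * ‖vhat‖ := abs_real_inner_le_norm _ _
    _ = ‖vhat‖ := by rw [hω, one_mul]
  have hcabs := abs_le.mp habs
  have ht : m ^ 2 / (2 * v0 ^ 2) ≤ 1 + c := by
    rw [div_le_iff₀ (by positivity)]
    nlinarith [mul_nonneg (sq_nonneg v0) (show (0:ℝ) ≤ c + ‖vhat‖ by linarith [hcabs.1]),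
      mul_nonneg (sq_nonneg v0) (sq_nonneg (1 - ‖vhat‖))]
  have htpos : 0 < 1 + c := lt_of_lt_of_le (by positivity) ht
  have hP2 : ‖ω - c • vhat‖ ^ 2 = 1 - c ^ 2 * (2 - ‖vhat‖ ^ 2) := by
    rw [norm_sub_sq_real, real_inner_smul_right, norm_smul, Real.norm_eq_abs, hω, ← hc]
    rw [mul_pow, sq_abs]
    ring
  have hP2le : ‖ω - c • vhat‖ ^ 2 ≤ 2 * (1 + c) := by
    rw [hP2]
    have h1a : (0:ℝ) ≤ 1 - ‖vhat‖ ^ 2 := by nlinarith [norm_nonneg vhat]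
    nlinarith [mul_nonneg (sq_nonneg c) h1a, sq_nonneg (1 + c)]
  have hRpos : 0 ≤ 3 * (1 + c) * v0 / m := by positivity
  have key : ‖ω - c • vhat‖ ≤ 3 * (1 + c) * v0 / m := by
    have hsq : ‖ω - c • vhat‖ ^ 2 ≤ (3 * (1 + c) * v0 / m) ^ 2 := by
      have h2 : 2 * (1 + c) ≤ (3 * (1 + c) * v0 / m) ^ 2 := by
        rw [div_pow, le_div_iff₀ (by positivity)]
        have h3 : m ^ 2 ≤ 2 * v0 ^ 2 * (1 + c) := by
          rw [div_le_iff₀ (by positivity)] at ht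
          linarith [ht]
        nlinarith [htpos, sq_nonneg v0, hv0pos]
      linarith [hP2le]
    exact (pow_le_pow_iff_left₀ (norm_nonneg _) hRpos (by norm_num)).mp hsq
  constructor
  · rw [hsym, ← hv0]; exact key
  · rw [hsym, div_le_iff₀ htpos]
    calc ‖ω - c • vhat‖ ≤ 3 * (1 + c) * v0 / m := key
    _ = 3 * v0 / m * (1 + c) := by ring
end
end

section
/- Let m > 0, v ∈ ℝ³, v⁰ = √(m² + ‖v‖²), v̂ = v/v⁰, let ω ∈ ℝ³ be a unit vector, and fix i ∈ {1,2,3} with standard basis vector eᵢ. Then ‖(eᵢ − v̂ᵢ v̂)/(v⁰(1 + v̂·ω))‖ ≤ 4√(m² + ‖v‖²)/m². -/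
noncomputable section

local notation "⟪" x ", " y "⟫" => @inner ℝ _ _ x y

/-- With `v⁰ = √(m² + ‖v‖²)`, `v̂ = v/v⁰`, `ω` a unit vector and `eᵢ` a
standard basis vector, the first piece `a⁽¹⁾ = (eᵢ − v̂ᵢ v̂)/(v⁰(1 + v̂·ω))` of the
velocity gradient of the Glassey–Strauss electric kernel satisfies
`‖a⁽¹⁾‖ ≤ 4√(m² + ‖v‖²)/m²`. -/
theorem aE_first_piece_bound
    (m : ℝ) (hm : 0 < m) (v ω : EuclideanSpace ℝ (Fin 3)) (hω : ‖ω‖ = 1)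
    (v0 : ℝ) (hv0 : v0 = Real.sqrt (m ^ 2 + ‖v‖ ^ 2))
    (vhat : EuclideanSpace ℝ (Fin 3)) (hvhat : vhat = v0⁻¹ • v) (i : Fin 3) :
    ‖(v0 * (1 + ⟪vhat, ω⟫))⁻¹ •
        (EuclideanSpace.single i (1 : ℝ) - vhat i • vhat)‖ ≤
      4 * Real.sqrt (m ^ 2 + ‖v‖ ^ 2) / m ^ 2 := by
  have hv0pos : 0 < v0 := by
    rw [hv0]; positivity
  have hv0sq : v0 ^ 2 = m ^ 2 + ‖v‖ ^ 2 := by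
    rw [hv0, Real.sq_sqrt (by positivity)]
  have hv0m : m ≤ v0 := by
    nlinarith [sq_nonneg ‖v‖]
  have hv0v : ‖v‖ ≤ v0 := by
    nlinarith [norm_nonneg v, sq_nonneg m]
  have hnv : ‖vhat‖ = ‖v‖ / v0 := by
    rw [hvhat, norm_smul, Real.norm_eq_abs, abs_of_pos (inv_pos.2 hv0pos)]
    field_simp
  have hnv1 : ‖vhat‖ ≤ 1 := by
    rw [hnv]; exact div_le_one_of_le₀ hv0v hv0pos.le
  have hCS : |⟪vhat, ω⟫| ≤ ‖vhat‖ := by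
    have := abs_real_inner_le_norm vhat ω
    rwa [hω, mul_one] at this
  have hinner : 1 - ‖vhat‖ ≤ 1 + ⟪vhat, ω⟫ := by
    have := (abs_le.1 hCS).1; linarith
  have hD : m ^ 2 / (2 * v0) ≤ v0 * (1 + ⟪vhat, ω⟫) := by
    have h1 : v0 - ‖v‖ ≤ v0 * (1 + ⟪vhat, ω⟫) := by
      have : v0 * (1 - ‖vhat‖) ≤ v0 * (1 + ⟪vhat, ω⟫) :=
        mul_le_mul_of_nonneg_left hinner hv0pos.le
      rw [hnv] at this
      calc v0 - ‖v‖ = v0 * (1 - ‖v‖ / v0) := by field_simp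
        _ ≤ _ := this
    have h2 : m ^ 2 / (2 * v0) ≤ v0 - ‖v‖ := by
      rw [div_le_iff₀ (by positivity)]
      nlinarith [norm_nonneg v]
    linarith
  have hDpos : 0 < v0 * (1 + ⟪vhat, ω⟫) := lt_of_lt_of_le (by positivity) hD
  -- numerator bound
  have hcoord : |vhat i| ≤ ‖vhat‖ := by
    have h := abs_real_inner_le_norm (EuclideanSpace.single i (1 : ℝ)) vhat
    rw [EuclideanSpace.inner_single_left, EuclideanSpace.norm_single] at h
    simpa using h
  have hnum : ‖EuclideanSpace.single i (1 : ℝ) - vhat i • vhat‖ ≤ 2 := by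
    calc ‖EuclideanSpace.single i (1 : ℝ) - vhat i • vhat‖
        ≤ ‖EuclideanSpace.single i (1 : ℝ)‖ + ‖vhat i • vhat‖ := norm_sub_le _ _
      _ = 1 + |vhat i| * ‖vhat‖ := by
          rw [EuclideanSpace.norm_single, norm_smul, Real.norm_eq_abs]; simp
      _ ≤ 2 := by nlinarith [abs_nonneg (vhat i), norm_nonneg vhat]
  rw [norm_smul, Real.norm_eq_abs, abs_of_pos (inv_pos.2 hDpos), ← hv0]
  have hinv : (v0 * (1 + ⟪vhat, ω⟫))⁻¹ ≤ 2 * v0 / m ^ 2 := by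
    have h := inv_anti₀ (by positivity : (0:ℝ) < m ^ 2 / (2 * v0)) hD
    rwa [inv_div] at h
  calc (v0 * (1 + ⟪vhat, ω⟫))⁻¹ * ‖EuclideanSpace.single i (1 : ℝ) - vhat i • vhat‖
      ≤ (2 * v0 / m ^ 2) * 2 := by
        apply mul_le_mul hinv hnum (norm_nonneg _) (by positivity)
    _ = 4 * v0 / m ^ 2 := by ring
end
end

section
/- Let m > 0, v ∈ ℝ³, v⁰ = √(m² + ‖v‖²), v̂ = v/v⁰, let ω ∈ ℝ³ be a unit vector, and fix i ∈ {1,2,3}. Then |ωᵢ + v̂ᵢ|·‖ω − (ω·v̂)v̂‖/(v⁰(1 + v̂·ω)²) ≤ 3√(m² + ‖v‖²)/m². -/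
noncomputable section

local notation "⟪" x ", " y "⟫" => @inner ℝ _ _ x y

private lemma polyineq (s t : ℝ) (h0 : 0 ≤ s) (h1 : s ≤ 1) (h2 : -s ≤ t) (h3 : t ≤ s) :
    (1+2*t+s^2)*(1-2*t^2+t^2*s^2)*(1-s^2)^2 ≤ 9*(1+t)^4 := by
  have hu : 0 ≤ 1 + t := by linarith
  have hA0 : 0 ≤ 1+2*t+s^2 := by nlinarith [sq_nonneg (1-s)]
  have hB0 : 0 ≤ 1-2*t^2+t^2*s^2 := by nlinarith [sq_nonneg (1-t^2), mul_nonneg (sq_nonneg t) (mul_nonneg (sub_nonneg.2 h3) (by linarith : (0:ℝ) ≤ s + t))]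
  have hC0 : (0:ℝ) ≤ (1-s^2)^2 := sq_nonneg _
  have hAle : 1+2*t+s^2 ≤ 2*(1+t) := by nlinarith
  rcases le_or_gt t (-(1/2)) with hc | hc
  · have hBle : 1-2*t^2+t^2*s^2 ≤ 2*(1+t) := by
      nlinarith [sq_nonneg (1+t), mul_nonneg (sq_nonneg t) (by nlinarith : (0:ℝ) ≤ 1 - s^2)]
    have hAC : (1+2*t+s^2)*(1-s^2)^2 ≤ 32*(1+t)^3/27 := by
      nlinarith [mul_nonneg (sq_nonneg (3*(1-s^2)-4*(1+t))) (by nlinarith : (0:ℝ) ≤ 3*(1-s^2)+2*(1+t))]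
    calc (1+2*t+s^2)*(1-2*t^2+t^2*s^2)*(1-s^2)^2
        = ((1+2*t+s^2)*(1-s^2)^2)*(1-2*t^2+t^2*s^2) := by ring
      _ ≤ (32*(1+t)^3/27)*(2*(1+t)) := by
          apply mul_le_mul hAC hBle hB0 (by positivity)
      _ ≤ 9*(1+t)^4 := by nlinarith [pow_nonneg hu 4]
  · have hBle : 1-2*t^2+t^2*s^2 ≤ 1-t^2 := by nlinarith [sq_nonneg t]
    have hCle : (1-s^2)^2 ≤ (1-t^2)^2 := by
      have h1' : 1-s^2 ≤ 1-t^2 := by nlinarith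
      have h2' : (0:ℝ) ≤ 1-s^2 := by nlinarith
      nlinarith
    have h1t : (0:ℝ) ≤ 1 - t^2 := by nlinarith
    calc (1+2*t+s^2)*(1-2*t^2+t^2*s^2)*(1-s^2)^2
        ≤ (2*(1+t))*(1-t^2)*(1-t^2)^2 := by
          apply mul_le_mul (mul_le_mul hAle hBle hB0 (by positivity)) hCle hC0
            (mul_nonneg (by positivity) h1t)
      _ ≤ 9*(1+t)^4 := by nlinarith [pow_nonneg hu 4, sq_nonneg (1+t), sq_nonneg (1-t), mul_nonneg hu h1t]

private lemma coord_le_norm (x : EuclideanSpace ℝ (Fin 3)) (i : Fin 3) : |x i| ≤ ‖x‖ := by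
  have h := abs_real_inner_le_norm (EuclideanSpace.single i (1:ℝ)) x
  simpa [EuclideanSpace.inner_single_left, EuclideanSpace.norm_single] using h

/-- With `v⁰ = √(m² + ‖v‖²)`, `v̂ = v/v⁰`, `ω` a unit vector and
`i ∈ {1,2,3}`, the second piece of the velocity gradient of the Glassey–Strauss electric
kernel satisfies `|ωᵢ + v̂ᵢ|·‖ω − (ω·v̂)v̂‖/(v⁰(1 + v̂·ω)²) ≤ 3√(m² + ‖v‖²)/m²`. -/
theorem aE_second_piece_bound
    (m : ℝ) (hm : 0 < m) (v ω : EuclideanSpace ℝ (Fin 3)) (hω : ‖ω‖ = 1)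
    (v0 : ℝ) (hv0 : v0 = Real.sqrt (m ^ 2 + ‖v‖ ^ 2))
    (vhat : EuclideanSpace ℝ (Fin 3)) (hvhat : vhat = v0⁻¹ • v) (i : Fin 3) :
    |ω i + vhat i| * ‖ω - ⟪ω, vhat⟫ • vhat‖ / (v0 * (1 + ⟪vhat, ω⟫) ^ 2) ≤
      3 * Real.sqrt (m ^ 2 + ‖v‖ ^ 2) / m ^ 2 := by
  have hv0sq : v0 ^ 2 = m ^ 2 + ‖v‖ ^ 2 := by
    rw [hv0]; exact Real.sq_sqrt (by positivity)
  have hv0m : m ≤ v0 := by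
    rw [hv0]
    calc m = Real.sqrt (m ^ 2) := by rw [Real.sqrt_sq hm.le]
    _ ≤ _ := Real.sqrt_le_sqrt (by nlinarith [sq_nonneg ‖v‖])
  have hv0pos : 0 < v0 := lt_of_lt_of_le hm hv0m
  set s : ℝ := ‖vhat‖ with hsdef
  set t : ℝ := ⟪ω, vhat⟫ with htdef
  have hs0 : 0 ≤ s := norm_nonneg _
  have hsv : s * v0 = ‖v‖ := by
    rw [hsdef, hvhat, norm_smul]
    rw [norm_inv, Real.norm_eq_abs, abs_of_pos hv0pos]
    field_simp [abs_of_pos hv0pos]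
  have hsv2 : s^2 * v0^2 = ‖v‖^2 := by rw [← hsv]; ring
  have he : (1 - s^2) * v0^2 = m^2 := by linear_combination hv0sq - hsv2
  have h1s2 : 0 < 1 - s^2 := by nlinarith [mul_pos hm hm, mul_pos hv0pos hv0pos]
  have hs1 : s < 1 := by nlinarith
  have ht : |t| ≤ s := by
    have := abs_real_inner_le_norm ω vhat
    simpa [hω] using this
  have ht1 : -s ≤ t := (abs_le.mp ht).1
  have ht2 : t ≤ s := (abs_le.mp ht).2
  have htpos : 0 < 1 + t := by linarith
  have htω : ⟪vhat, ω⟫ = t := real_inner_comm _ _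
  have hA : |ω i + vhat i| ^ 2 ≤ 1 + 2*t + s^2 := by
    have h1 : |ω i + vhat i| ≤ ‖ω + vhat‖ := by
      have := coord_le_norm (ω + vhat) i
      simpa using this
    have h2 : ‖ω + vhat‖ ^ 2 = 1 + 2*t + s^2 := by
      rw [norm_add_sq_real, hω, ← htdef]; ring
    calc |ω i + vhat i| ^ 2 ≤ ‖ω + vhat‖ ^ 2 := by
          exact pow_le_pow_left₀ (abs_nonneg _) h1 2
      _ = 1 + 2*t + s^2 := h2
  have hB : ‖ω - t • vhat‖ ^ 2 = 1 - 2*t^2 + t^2*s^2 := by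
    rw [norm_sub_sq_real, real_inner_smul_right, ← htdef, hω, norm_smul, mul_pow, Real.norm_eq_abs, sq_abs]
    ring
  have key := polyineq s t hs0 hs1.le ht1 ht2
  rw [← hv0, htω]
  have hb0 : 0 ≤ ‖ω - t • vhat‖ := norm_nonneg _
  have ha0 : 0 ≤ |ω i + vhat i| := abs_nonneg _
  rw [div_le_div_iff₀ (by positivity) (by positivity)]
  set a := |ω i + vhat i|
  set b := ‖ω - t • vhat‖
  have hsq : (a * b * m ^ 2) ^ 2 ≤ (3 * v0 * (v0 * (1 + t) ^ 2)) ^ 2 := by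
    have e1 : (a * b * m ^ 2) ^ 2 = (a^2 * b^2 * (1-s^2)^2) * (v0^2)^2 := by
      rw [← he]; ring
    have e2 : (3 * v0 * (v0 * (1 + t) ^ 2)) ^ 2 = (9 * (1+t)^4) * (v0^2)^2 := by ring
    rw [e1, e2]
    apply mul_le_mul_of_nonneg_right _ (by positivity)
    calc a^2 * b^2 * (1-s^2)^2 ≤ (1+2*t+s^2) * (1-2*t^2+t^2*s^2) * (1-s^2)^2 := by
          apply mul_le_mul_of_nonneg_right _ (sq_nonneg _)
          rw [hB]
          exact mul_le_mul_of_nonneg_right hA (by rw [← hB]; positivity)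
      _ ≤ 9 * (1+t)^4 := key
  have hrhs : 0 ≤ 3 * v0 * (v0 * (1 + t) ^ 2) := by positivity
  have hlhs : 0 ≤ a * b * m ^ 2 := by positivity
  exact (pow_le_pow_iff_left₀ hlhs hrhs two_ne_zero).mp hsq
end
end

section
/- Fix m > 0 and Y ∈ ℝ³ with Y ≠ 0. Define F : ℝ³ → ℝ³ by F(v) = (Y/‖Y‖²) × (v̂/(1 + v̂·(Y/‖Y‖))) = (Y × v)/(‖Y‖²√(m² + ‖v‖²) + ‖Y‖(Y·v)), where v̂ = v/√(m² + ‖v‖²). Then the denominator ‖Y‖²√(m² + ‖v‖²) + ‖Y‖(Y·v) is strictly positive for every v, the map F is differentiable on ℝ³, and F is divergence-free: ∑_{i=1}^{3} ∂Fᵢ/∂vᵢ(v) = 0 for every v ∈ ℝ³. -/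
noncomputable section

local notation "⟪" x ", " y "⟫" => @inner ℝ _ _ x y

lemma mk12_cross3_smul (a b : EuclideanSpace ℝ (Fin 3)) (c : ℝ) :
    cross3 a (c • b) = c • cross3 a b := by
  ext i
  simp only [cross3, WithLp.equiv_symm_apply, PiLp.smul_apply, smul_eq_mul]
  fin_cases i <;> simp [PiLp.smul_apply, smul_eq_mul] <;> ring

lemma mk12_denom_pos (m : ℝ) (hm : 0 < m) (Y : EuclideanSpace ℝ (Fin 3)) (hY : Y ≠ 0)
    (v : EuclideanSpace ℝ (Fin 3)) :
    0 < ‖Y‖ ^ 2 * Real.sqrt (m ^ 2 + ‖v‖ ^ 2) + ‖Y‖ * ⟪Y, v⟫ := by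
  have hYn : (0:ℝ) < ‖Y‖ := norm_pos_iff.mpr hY
  have hvlt : ‖v‖ < Real.sqrt (m ^ 2 + ‖v‖ ^ 2) :=
    (Real.lt_sqrt (norm_nonneg v)).mpr (by nlinarith [pow_pos hm 2])
  have h1 := abs_real_inner_le_norm Y v
  have h2 := neg_abs_le (⟪Y, v⟫ : ℝ)
  nlinarith [mul_pos (mul_pos hYn hYn) (sub_pos.mpr hvlt)]

lemma mk12_hasFDerivAt_g (m : ℝ) (hm : 0 < m) (Y v : EuclideanSpace ℝ (Fin 3)) :
    HasFDerivAt (fun u : EuclideanSpace ℝ (Fin 3) =>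
        ‖Y‖ ^ 2 * Real.sqrt (m ^ 2 + ‖u‖ ^ 2) + ‖Y‖ * ⟪Y, u⟫)
      (‖Y‖ ^ 2 • ((1 / (2 * Real.sqrt (m ^ 2 + ‖v‖ ^ 2))) •
          ((2:ℕ) • (innerSL ℝ v).comp (ContinuousLinearMap.id ℝ _))) +
        ‖Y‖ • innerSL ℝ Y) v := by
  have hq : (0:ℝ) < m ^ 2 + ‖v‖ ^ 2 := by positivity
  have h1 : HasFDerivAt (fun u : EuclideanSpace ℝ (Fin 3) => ‖u‖ ^ 2)
      ((2:ℕ) • (innerSL ℝ v).comp (ContinuousLinearMap.id ℝ _)) v :=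
    (hasFDerivAt_id v).norm_sq
  have h2 := h1.const_add (m ^ 2)
  have h3 := (Real.hasDerivAt_sqrt hq.ne').comp_hasFDerivAt v h2
  exact (h3.const_mul (‖Y‖ ^ 2)).add (((innerSL ℝ Y).hasFDerivAt (x := v)).const_mul ‖Y‖)

set_option maxHeartbeats 2000000 in
lemma mk12_fderiv_val (m : ℝ) (hm : 0 < m) (Y : EuclideanSpace ℝ (Fin 3)) (hY : Y ≠ 0)
    (v : EuclideanSpace ℝ (Fin 3)) (a b i : Fin 3) (hia : i ≠ a) (hib : i ≠ b) :
    fderiv ℝ (fun u : EuclideanSpace ℝ (Fin 3) =>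
        (‖Y‖ ^ 2 * Real.sqrt (m ^ 2 + ‖u‖ ^ 2) + ‖Y‖ * ⟪Y, u⟫)⁻¹ * (Y a * u b - Y b * u a)) v
        (EuclideanSpace.single i (1 : ℝ)) =
      (Y a * v b - Y b * v a) *
        (-((‖Y‖ ^ 2 * Real.sqrt (m ^ 2 + ‖v‖ ^ 2) + ‖Y‖ * ⟪Y, v⟫) ^ 2)⁻¹ *
          (‖Y‖ ^ 2 * ((Real.sqrt (m ^ 2 + ‖v‖ ^ 2))⁻¹ * v i) + ‖Y‖ * Y i)) := by
  have hq : (0:ℝ) < m ^ 2 + ‖v‖ ^ 2 := by positivity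
  have hs : (0:ℝ) < Real.sqrt (m ^ 2 + ‖v‖ ^ 2) := Real.sqrt_pos.mpr hq
  have hpos := mk12_denom_pos m hm Y hY v
  have hg := mk12_hasFDerivAt_g m hm Y v
  have hinv := (hasDerivAt_inv hpos.ne').comp_hasFDerivAt v hg
  have hpb : HasFDerivAt (fun u : EuclideanSpace ℝ (Fin 3) => u b)
      (EuclideanSpace.proj b : EuclideanSpace ℝ (Fin 3) →L[ℝ] ℝ) v := by
    exact (EuclideanSpace.proj b : EuclideanSpace ℝ (Fin 3) →L[ℝ] ℝ).hasFDerivAt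
  have hpa : HasFDerivAt (fun u : EuclideanSpace ℝ (Fin 3) => u a)
      (EuclideanSpace.proj a : EuclideanSpace ℝ (Fin 3) →L[ℝ] ℝ) v := by
    exact (EuclideanSpace.proj a : EuclideanSpace ℝ (Fin 3) →L[ℝ] ℝ).hasFDerivAt
  have hlin : HasFDerivAt (fun u : EuclideanSpace ℝ (Fin 3) => Y a * u b - Y b * u a)
      (Y a • EuclideanSpace.proj b - Y b • EuclideanSpace.proj a) v :=
    (hpb.const_mul (Y a)).sub (hpa.const_mul (Y b))
  have hmul := hinv.mul hlin
  simp only [Function.comp_def] at hmul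
  have hp : ∀ (j : Fin 3) (x : EuclideanSpace ℝ (Fin 3)), EuclideanSpace.proj j x = x j :=
    fun _ _ => rfl
  rw [(show HasFDerivAt (fun u : EuclideanSpace ℝ (Fin 3) =>
      (‖Y‖ ^ 2 * Real.sqrt (m ^ 2 + ‖u‖ ^ 2) + ‖Y‖ * ⟪Y, u⟫)⁻¹ * (Y a * u b - Y b * u a)) _ v
      from hmul).fderiv]
  have e1 : (EuclideanSpace.single i (1:ℝ)) a = 0 := by
    rw [EuclideanSpace.single_apply]; simp [hia, hia.symm]
  have e2 : (EuclideanSpace.single i (1:ℝ)) b = 0 := by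
    rw [EuclideanSpace.single_apply]; simp [hib, hib.symm]
  have e3 : ⟪v, EuclideanSpace.single i (1:ℝ)⟫ = v i := by
    rw [EuclideanSpace.inner_single_right]; simp
  have e4 : ⟪Y, EuclideanSpace.single i (1:ℝ)⟫ = Y i := by
    rw [EuclideanSpace.inner_single_right]; simp
  simp only [ContinuousLinearMap.add_apply, ContinuousLinearMap.coe_smul', Pi.smul_apply,
    ContinuousLinearMap.sub_apply, ContinuousLinearMap.comp_apply, ContinuousLinearMap.id_apply,
    ContinuousLinearMap.smul_apply, Pi.mul_apply, innerSL_apply_apply, smul_eq_mul, hp, e1, e2, e3, e4, nsmul_eq_mul, one_div, mul_inv]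
  ring

/-- Fix `m > 0` and `Y ≠ 0`. Define
`F(v) = (Y/‖Y‖²) × (v̂/(1 + v̂·(Y/‖Y‖))) = (Y × v)/(‖Y‖²√(m² + ‖v‖²) + ‖Y‖(Y·v))`, with
`v̂ = v/√(m² + ‖v‖²)`. Then the denominator is strictly positive, the two displayed forms
of `F` agree, `F` is differentiable on `ℝ³`, and `F` is divergence-free:
`∑ᵢ ∂Fᵢ/∂vᵢ(v) = 0` for every `v`. -/
theorem magnetic_kernel_divergence_free
    (m : ℝ) (hm : 0 < m) (Y : EuclideanSpace ℝ (Fin 3)) (hY : Y ≠ 0)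
    (F : EuclideanSpace ℝ (Fin 3) → EuclideanSpace ℝ (Fin 3))
    (hF : ∀ v, F v =
      (‖Y‖ ^ 2 * Real.sqrt (m ^ 2 + ‖v‖ ^ 2) + ‖Y‖ * ⟪Y, v⟫)⁻¹ • cross3 Y v) :
    (∀ v : EuclideanSpace ℝ (Fin 3),
        0 < ‖Y‖ ^ 2 * Real.sqrt (m ^ 2 + ‖v‖ ^ 2) + ‖Y‖ * ⟪Y, v⟫) ∧
    (∀ v : EuclideanSpace ℝ (Fin 3), F v =
        (‖Y‖ ^ 2)⁻¹ • cross3 Y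
          ((1 + ⟪(Real.sqrt (m ^ 2 + ‖v‖ ^ 2))⁻¹ • v, ‖Y‖⁻¹ • Y⟫)⁻¹ •
            ((Real.sqrt (m ^ 2 + ‖v‖ ^ 2))⁻¹ • v))) ∧
    Differentiable ℝ F ∧
    (∀ v : EuclideanSpace ℝ (Fin 3),
        ∑ i : Fin 3,
          fderiv ℝ (fun u => F u i) v (EuclideanSpace.single i (1 : ℝ)) = 0) := by
  have hYn : (0:ℝ) < ‖Y‖ := norm_pos_iff.mpr hY
  have hq : ∀ v : EuclideanSpace ℝ (Fin 3), (0:ℝ) < m ^ 2 + ‖v‖ ^ 2 := fun v => by positivity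
  have hs : ∀ v : EuclideanSpace ℝ (Fin 3), (0:ℝ) < Real.sqrt (m ^ 2 + ‖v‖ ^ 2) :=
    fun v => Real.sqrt_pos.mpr (hq v)
  have hpos := mk12_denom_pos m hm Y hY
  have hkey : ∀ v : EuclideanSpace ℝ (Fin 3),
      (0:ℝ) < ‖Y‖ * Real.sqrt (m ^ 2 + ‖v‖ ^ 2) + ⟪Y, v⟫ := by
    intro v; nlinarith [hpos v, hYn]
  refine ⟨hpos, ?_, ?_, ?_⟩
  · -- alternate form
    intro v
    have hI : ⟪(Real.sqrt (m ^ 2 + ‖v‖ ^ 2))⁻¹ • v, ‖Y‖⁻¹ • Y⟫ =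
        (Real.sqrt (m ^ 2 + ‖v‖ ^ 2))⁻¹ * (‖Y‖⁻¹ * ⟪Y, v⟫) := by
      rw [real_inner_smul_left, real_inner_smul_right, real_inner_comm]
    have hden : (1:ℝ) + (Real.sqrt (m ^ 2 + ‖v‖ ^ 2))⁻¹ * (‖Y‖⁻¹ * ⟪Y, v⟫) ≠ 0 := by
      have heq : (1:ℝ) + (Real.sqrt (m ^ 2 + ‖v‖ ^ 2))⁻¹ * (‖Y‖⁻¹ * ⟪Y, v⟫) =
          (‖Y‖ * Real.sqrt (m ^ 2 + ‖v‖ ^ 2) + ⟪Y, v⟫) /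
            (‖Y‖ * Real.sqrt (m ^ 2 + ‖v‖ ^ 2)) := by
        field_simp
      rw [heq]
      exact ne_of_gt (div_pos (hkey v) (mul_pos hYn (hs v)))
    rw [hF v, hI, smul_smul, mk12_cross3_smul, smul_smul]
    congr 1
    have hscal : ∀ t s ny : ℝ, 0 < s → 0 < ny → 0 < ny * s + t →
        (ny ^ 2 * s + ny * t)⁻¹ = (ny ^ 2)⁻¹ * ((1 + s⁻¹ * (ny⁻¹ * t))⁻¹ * s⁻¹) := by
      intro t s ny hs hny hk
      have h1 : 1 + s⁻¹ * (ny⁻¹ * t) = (ny * s + t) / (ny * s) := by field_simp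
      rw [h1, inv_div, show ny ^ 2 * s + ny * t = ny * (ny * s + t) by ring, mul_inv]
      field_simp
    exact hscal ⟪Y, v⟫ (Real.sqrt (m ^ 2 + ‖v‖ ^ 2)) ‖Y‖ (hs v) hYn (hkey v)
  · -- differentiability
    have hgd : ∀ v, DifferentiableAt ℝ (fun u : EuclideanSpace ℝ (Fin 3) =>
        ‖Y‖ ^ 2 * Real.sqrt (m ^ 2 + ‖u‖ ^ 2) + ‖Y‖ * ⟪Y, u⟫) v :=
      fun v => (mk12_hasFDerivAt_g m hm Y v).differentiableAt
    have hginv : Differentiable ℝ fun u : EuclideanSpace ℝ (Fin 3) =>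
        (‖Y‖ ^ 2 * Real.sqrt (m ^ 2 + ‖u‖ ^ 2) + ‖Y‖ * ⟪Y, u⟫)⁻¹ :=
      fun v => (hgd v).inv (hpos v).ne'
    have hproj : ∀ i : Fin 3, Differentiable ℝ (fun u : EuclideanSpace ℝ (Fin 3) => u i) :=
      fun i => (EuclideanSpace.proj i : EuclideanSpace ℝ (Fin 3) →L[ℝ] ℝ).differentiable
    have hcrossrep : (fun u : EuclideanSpace ℝ (Fin 3) => cross3 Y u) =
        fun u => (Y 1 * u 2 - Y 2 * u 1) • EuclideanSpace.single 0 (1:ℝ)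
          + (Y 2 * u 0 - Y 0 * u 2) • EuclideanSpace.single 1 (1:ℝ)
          + (Y 0 * u 1 - Y 1 * u 0) • EuclideanSpace.single 2 (1:ℝ) := by
      funext u; ext i
      fin_cases i <;>
        simp [cross3, WithLp.equiv_symm_apply, PiLp.add_apply, PiLp.smul_apply,
          EuclideanSpace.single_apply, smul_eq_mul]
    have hcd : Differentiable ℝ (fun u : EuclideanSpace ℝ (Fin 3) => cross3 Y u) := by
      rw [hcrossrep]
      exact ((((hproj 2).const_mul (Y 1)).sub ((hproj 1).const_mul (Y 2))).smul_const _ |>.add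
        ((((hproj 0).const_mul (Y 2)).sub ((hproj 2).const_mul (Y 0))).smul_const _)).add
        ((((hproj 1).const_mul (Y 0)).sub ((hproj 0).const_mul (Y 1))).smul_const _)
    have hFeq : F = fun u => (‖Y‖ ^ 2 * Real.sqrt (m ^ 2 + ‖u‖ ^ 2) + ‖Y‖ * ⟪Y, u⟫)⁻¹ •
        cross3 Y u := funext hF
    rw [hFeq]
    exact hginv.smul hcd
  · -- divergence free
    intro v
    have h0 : (fun u : EuclideanSpace ℝ (Fin 3) => F u 0) = fun u =>
        (‖Y‖ ^ 2 * Real.sqrt (m ^ 2 + ‖u‖ ^ 2) + ‖Y‖ * ⟪Y, u⟫)⁻¹ * (Y 1 * u 2 - Y 2 * u 1) := by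
      funext u; rw [hF u]
      simp [cross3, PiLp.smul_apply, WithLp.equiv_symm_apply, smul_eq_mul]
    have h1 : (fun u : EuclideanSpace ℝ (Fin 3) => F u 1) = fun u =>
        (‖Y‖ ^ 2 * Real.sqrt (m ^ 2 + ‖u‖ ^ 2) + ‖Y‖ * ⟪Y, u⟫)⁻¹ * (Y 2 * u 0 - Y 0 * u 2) := by
      funext u; rw [hF u]
      simp [cross3, PiLp.smul_apply, WithLp.equiv_symm_apply, smul_eq_mul]
    have h2 : (fun u : EuclideanSpace ℝ (Fin 3) => F u 2) = fun u =>
        (‖Y‖ ^ 2 * Real.sqrt (m ^ 2 + ‖u‖ ^ 2) + ‖Y‖ * ⟪Y, u⟫)⁻¹ * (Y 0 * u 1 - Y 1 * u 0) := by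
      funext u; rw [hF u]
      simp [cross3, PiLp.smul_apply, WithLp.equiv_symm_apply, smul_eq_mul]
    rw [Fin.sum_univ_three, h0, h1, h2,
      mk12_fderiv_val m hm Y hY v 1 2 0 (by decide) (by decide),
      mk12_fderiv_val m hm Y hY v 2 0 1 (by decide) (by decide),
      mk12_fderiv_val m hm Y hY v 0 1 2 (by decide) (by decide)]
    ring
end
end

section
/- Let m, g > 0, σ ∈ {+1, −1}, e₃ = (0,0,1), and let a ≤ 0 ≤ b. Let X, V : [a,b] → ℝ³ be differentiable with X'(s) = V̂(s) := V(s)/√(m² + ‖V(s)‖²) and V'(s) = σ(E(s) + V̂(s) × B(s)) − m g e₃ for all s ∈ [a,b], where E, B : [a,b] → ℝ³ satisfy ‖E(s)‖ ≤ m g/8 and ‖B(s)‖ ≤ m g/8 for all s. If X₃(a) = X₃(b) = 0 and X₃(s) ≥ 0 for all s ∈ [a,b], then b − a ≤ (16/(5 m g))·(√(m² + ‖V(0)‖²) + m g·X₃(0)). -/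
noncomputable section

local notation "⟪" x ", " y "⟫" => @inner ℝ _ _ x y

lemma norm_sq_eq3 (u : EuclideanSpace ℝ (Fin 3)) :
    ‖u‖ ^ 2 = u 0 * u 0 + u 1 * u 1 + u 2 * u 2 := by
  rw [← real_inner_self_eq_norm_sq]
  simp only [PiLp.inner_apply, Fin.sum_univ_three, RCLike.inner_apply, conj_trivial]

lemma abs_apply_le_norm (u : EuclideanSpace ℝ (Fin 3)) (i : Fin 3) : |u i| ≤ ‖u‖ := by
  have h := abs_real_inner_le_norm (EuclideanSpace.single i (1 : ℝ)) u
  simpa [EuclideanSpace.inner_single_left] using h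

lemma cross3_apply2 (u w : EuclideanSpace ℝ (Fin 3)) :
    cross3 u w 2 = u 0 * w 1 - u 1 * w 0 := by
  simp [cross3]

lemma inner_cross3_self (u w : EuclideanSpace ℝ (Fin 3)) : ⟪u, cross3 u w⟫ = 0 := by
  simp only [cross3, PiLp.inner_apply, Fin.sum_univ_three, RCLike.inner_apply, conj_trivial,
    WithLp.equiv_symm_apply, PiLp.toLp_apply, WithLp.ofLp_toLp, Matrix.cons_val_zero, Matrix.cons_val_one, Matrix.head_cons,
    Matrix.cons_val_two, Matrix.tail_cons]
  ring

lemma inner_smul_cross3_self (c : ℝ) (u w : EuclideanSpace ℝ (Fin 3)) :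
    ⟪u, cross3 (c • u) w⟫ = 0 := by
  simp only [cross3, PiLp.inner_apply, Fin.sum_univ_three, RCLike.inner_apply, conj_trivial,
    WithLp.equiv_symm_apply, PiLp.toLp_apply, WithLp.ofLp_toLp, Matrix.cons_val_zero, Matrix.cons_val_one, Matrix.head_cons,
    Matrix.cons_val_two, Matrix.tail_cons, PiLp.smul_apply, smul_eq_mul]
  ring

lemma abs_cross3_apply2_le (u w : EuclideanSpace ℝ (Fin 3)) :
    |cross3 u w 2| ≤ ‖u‖ * ‖w‖ := by
  rw [cross3_apply2]
  have hu := norm_sq_eq3 u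
  have hw := norm_sq_eq3 w
  have h0 := norm_nonneg u
  have h1 := norm_nonneg w
  rw [abs_le]
  constructor <;>
    nlinarith [sq_nonneg (u 0 * w 0 + u 1 * w 1), sq_nonneg (u 2), sq_nonneg (w 2),
      sq_nonneg (‖u‖ * ‖w‖ + (u 0 * w 1 - u 1 * w 0)),
      sq_nonneg (‖u‖ * ‖w‖ - (u 0 * w 1 - u 1 * w 0)), sq_nonneg (u 2 * w 2),
      mul_nonneg h0 h1, sq_nonneg (u 0 * w 2), sq_nonneg (u 1 * w 2),
      sq_nonneg (u 2 * w 0), sq_nonneg (u 2 * w 1)]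

/-- Travel-time bound.  Along relativistic characteristics with gravity
(`X' = V̂`, `V' = σ(E + V̂ × B) − m g e₃` on `[a,b]`, `a ≤ 0 ≤ b`), with field bounds
`‖E‖, ‖B‖ ≤ m g/8`, if `X₃(a) = X₃(b) = 0` and `X₃ ≥ 0` on `[a,b]`, then
`b − a ≤ (16/(5 m g))·(√(m² + ‖V(0)‖²) + m g X₃(0))`. -/
theorem travel_time_bound
    (m g σ : ℝ) (hm : 0 < m) (hg : 0 < g) (hσ : σ = 1 ∨ σ = -1)
    (a b : ℝ) (ha : a ≤ 0) (hb : 0 ≤ b)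
    (X V E B : ℝ → EuclideanSpace ℝ (Fin 3))
    (hX : ∀ s ∈ Set.Icc a b,
      HasDerivWithinAt X ((Real.sqrt (m ^ 2 + ‖V s‖ ^ 2))⁻¹ • V s) (Set.Icc a b) s)
    (hV : ∀ s ∈ Set.Icc a b,
      HasDerivWithinAt V
        (σ • (E s + cross3 ((Real.sqrt (m ^ 2 + ‖V s‖ ^ 2))⁻¹ • V s) (B s)) -
          (m * g) • EuclideanSpace.single (2 : Fin 3) (1 : ℝ))
        (Set.Icc a b) s)
    (hE : ∀ s ∈ Set.Icc a b, ‖E s‖ ≤ m * g / 8)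
    (hB : ∀ s ∈ Set.Icc a b, ‖B s‖ ≤ m * g / 8)
    (hXa : X a 2 = 0) (hXb : X b 2 = 0)
    (hX3 : ∀ s ∈ Set.Icc a b, 0 ≤ X s 2) :
    b - a ≤ 16 / (5 * m * g) * (Real.sqrt (m ^ 2 + ‖V 0‖ ^ 2) + m * g * X 0 2) := by
  set K := Set.Icc a b with hK
  have h0K : (0 : ℝ) ∈ K := ⟨ha, hb⟩
  have haK : a ∈ K := ⟨le_refl a, ha.trans hb⟩
  have hbK : b ∈ K := ⟨ha.trans hb, le_refl b⟩
  set W : ℝ → ℝ := fun s => Real.sqrt (m ^ 2 + ‖V s‖ ^ 2) with hWdef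
  have hsqpos : ∀ s, 0 < m ^ 2 + ‖V s‖ ^ 2 := fun s => by positivity
  have hWpos : ∀ s, 0 < W s := fun s => Real.sqrt_pos.mpr (hsqpos s)
  have hVleW : ∀ s, ‖V s‖ ≤ W s := by
    intro s
    have : ‖V s‖ = Real.sqrt (‖V s‖ ^ 2) := (Real.sqrt_sq (norm_nonneg _)).symm
    rw [this]
    exact Real.sqrt_le_sqrt (by nlinarith)
  have hVhat : ∀ s, ‖(W s)⁻¹ • V s‖ ≤ 1 := by
    intro s
    rw [norm_smul, norm_inv, Real.norm_eq_abs, abs_of_pos (hWpos s)]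
    have h := mul_le_mul_of_nonneg_left (hVleW s) (inv_nonneg.mpr (hWpos s).le)
    have h2 : (W s)⁻¹ * W s = 1 := inv_mul_cancel₀ (hWpos s).ne'
    linarith
  have hσ1 : |σ| = 1 := by rcases hσ with h | h <;> simp [h]
  -- the full derivative of V
  set D : ℝ → EuclideanSpace ℝ (Fin 3) := fun s =>
    σ • (E s + cross3 ((W s)⁻¹ • V s) (B s)) - (m * g) • EuclideanSpace.single (2 : Fin 3) (1 : ℝ)
    with hDdef
  -- derivative of s ↦ X s 2
  have hX3d : ∀ s ∈ K, HasDerivWithinAt (fun t => X t 2) ((W s)⁻¹ * V s 2) K s := by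
    intro s hs
    have h := (EuclideanSpace.proj (2 : Fin 3)).hasFDerivAt.comp_hasDerivWithinAt s (hX s hs)
    simp at h
    exact h
  -- derivative of s ↦ V s 2
  have hV3d : ∀ s ∈ K, HasDerivWithinAt (fun t => V t 2)
      (σ * (E s 2 + cross3 ((W s)⁻¹ • V s) (B s) 2) - m * g) K s := by
    intro s hs
    have h := (EuclideanSpace.proj (2 : Fin 3)).hasFDerivAt.comp_hasDerivWithinAt s (hV s hs)
    have : (EuclideanSpace.proj (2 : Fin 3)) (D s)
        = σ * (E s 2 + cross3 ((W s)⁻¹ • V s) (B s) 2) - m * g := by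
      simp [hDdef, EuclideanSpace.single_apply, mul_add]
    rw [this] at h
    exact h
  -- derivative of W
  have hWd : ∀ s ∈ K, HasDerivWithinAt W ((W s)⁻¹ * ⟪V s, D s⟫) K s := by
    intro s hs
    have hVs := hV s hs
    have hinner : HasDerivWithinAt (fun t => m ^ 2 + ⟪V t, V t⟫)
        (0 + (⟪V s, D s⟫ + ⟪D s, V s⟫)) K s :=
      (hasDerivWithinAt_const s K (m ^ 2)).add (hVs.inner ℝ hVs)
    have hsq : HasDerivWithinAt (fun t => m ^ 2 + ‖V t‖ ^ 2)
        (0 + (⟪V s, D s⟫ + ⟪D s, V s⟫)) K s := by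
      convert hinner using 2 with t
      rw [real_inner_self_eq_norm_sq]
    have hroot := (Real.hasDerivAt_sqrt (ne_of_gt (hsqpos s))).comp_hasDerivWithinAt s hsq
    convert hroot using 1
    · rfl
    · rfl
    · rfl
    rw [real_inner_comm (D s) (V s)]
    have hW : Real.sqrt (m ^ 2 + ‖V s‖ ^ 2) ≠ 0 := (hWpos s).ne'
    simp only [hWdef]
    field_simp [hWdef]
    all_goals ring
  -- derivative of energy H
  set H : ℝ → ℝ := fun s => W s + m * g * X s 2 with hHdef
  have hHd : ∀ s ∈ K, HasDerivWithinAt H (σ * ⟪(W s)⁻¹ • V s, E s⟫) K s := by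
    intro s hs
    have h := (hWd s hs).add ((hX3d s hs).const_mul (m * g))
    convert h using 1
    · rfl
    · rfl
    · rfl
    have hcross : ⟪V s, cross3 ((W s)⁻¹ • V s) (B s)⟫ = 0 := inner_smul_cross3_self _ _ _
    have hsingle : ⟪V s, EuclideanSpace.single (2 : Fin 3) (1 : ℝ)⟫ = V s 2 := by
      simp [EuclideanSpace.inner_single_right]
    have hexp : ⟪V s, D s⟫ = σ * ⟪V s, E s⟫ - m * g * V s 2 := by
      rw [hDdef]
      simp only [inner_sub_right, real_inner_smul_right, inner_add_right, hcross, hsingle]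
      ring
    rw [hexp, real_inner_smul_left]
    have hW : Real.sqrt (m ^ 2 + ‖V s‖ ^ 2) ≠ 0 := (hWpos s).ne'
    field_simp [hWdef]
    all_goals ring
  have hHbound : ∀ s ∈ K, ‖σ * ⟪(W s)⁻¹ • V s, E s⟫‖ ≤ m * g / 8 := by
    intro s hs
    rw [Real.norm_eq_abs, abs_mul, hσ1, one_mul]
    calc |⟪(W s)⁻¹ • V s, E s⟫| ≤ ‖(W s)⁻¹ • V s‖ * ‖E s‖ := abs_real_inner_le_norm _ _
      _ ≤ 1 * (m * g / 8) := by
          apply mul_le_mul (hVhat s) (hE s hs) (norm_nonneg _) zero_le_one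
      _ = m * g / 8 := one_mul _
  -- derivative of G := V₃ + m g s
  set G : ℝ → ℝ := fun s => V s 2 + m * g * s with hGdef
  have hGd : ∀ s ∈ K, HasDerivWithinAt G
      (σ * (E s 2 + cross3 ((W s)⁻¹ • V s) (B s) 2)) K s := by
    intro s hs
    have h := (hV3d s hs).add ((hasDerivWithinAt_id s K).const_mul (m * g))
    convert h using 1
    · rfl
    · rfl
    · rfl
    ring
  have hGbound : ∀ s ∈ K, ‖σ * (E s 2 + cross3 ((W s)⁻¹ • V s) (B s) 2)‖ ≤ m * g / 4 := by
    intro s hs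
    rw [Real.norm_eq_abs, abs_mul, hσ1, one_mul]
    have h1 : |E s 2| ≤ m * g / 8 := (abs_apply_le_norm (E s) 2).trans (hE s hs)
    have h2 : |cross3 ((W s)⁻¹ • V s) (B s) 2| ≤ m * g / 8 := by
      refine (abs_cross3_apply2_le _ _).trans ?_
      calc ‖(W s)⁻¹ • V s‖ * ‖B s‖ ≤ 1 * (m * g / 8) :=
            mul_le_mul (hVhat s) (hB s hs) (norm_nonneg _) zero_le_one
        _ = m * g / 8 := one_mul _
    calc |E s 2 + cross3 ((W s)⁻¹ • V s) (B s) 2|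
        ≤ |E s 2| + |cross3 ((W s)⁻¹ • V s) (B s) 2| := abs_add_le _ _
      _ ≤ m * g / 4 := by linarith
  -- mean value inequalities
  have hMa : ‖H 0 - H a‖ ≤ m * g / 8 * ‖(0 : ℝ) - a‖ :=
    Convex.norm_image_sub_le_of_norm_hasDerivWithin_le hHd hHbound (convex_Icc a b) haK h0K
  have hMb : ‖H b - H 0‖ ≤ m * g / 8 * ‖b - 0‖ :=
    Convex.norm_image_sub_le_of_norm_hasDerivWithin_le hHd hHbound (convex_Icc a b) h0K hbK
  have hMG : ‖G b - G a‖ ≤ m * g / 4 * ‖b - a‖ :=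
    Convex.norm_image_sub_le_of_norm_hasDerivWithin_le hGd hGbound (convex_Icc a b) haK hbK
  have habs_a : |(0 : ℝ) - a| = -a := by rw [zero_sub, abs_neg, abs_of_nonpos ha]
  rw [Real.norm_eq_abs, Real.norm_eq_abs, habs_a] at hMa
  rw [Real.norm_eq_abs, Real.norm_eq_abs, sub_zero, abs_of_nonneg hb] at hMb
  rw [Real.norm_eq_abs, Real.norm_eq_abs,
    abs_of_nonneg (by linarith : (0 : ℝ) ≤ b - a)] at hMG
  have hHa : H a - H 0 ≤ m * g / 8 * (-a) := (abs_le.mp hMa).1 |> fun h => by linarith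
  have hHb : H b - H 0 ≤ m * g / 8 * b := (abs_le.mp hMb).2
  have hG2 : G b - G a ≤ m * g / 4 * (b - a) := (abs_le.mp hMG).2
  -- boundary bounds: |V₃| ≤ W = H at the endpoints
  have hVa : V a 2 ≤ H a := by
    have h1 : V a 2 ≤ |V a 2| := le_abs_self _
    have h2 := (abs_apply_le_norm (V a) 2).trans (hVleW a)
    rw [hHdef]
    simp only [hXa, mul_zero, add_zero]
    linarith
  have hVb : -(V b 2) ≤ H b := by
    have h1 : -(V b 2) ≤ |V b 2| := neg_le_abs _
    have h2 := (abs_apply_le_norm (V b) 2).trans (hVleW b)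
    rw [hHdef]
    simp only [hXb, mul_zero, add_zero]
    linarith
  -- combine
  have hH0 : W 0 + m * g * X 0 2 = H 0 := rfl
  rw [hH0]
  have hGba : G b - G a = V b 2 - V a 2 + m * g * (b - a) := by rw [hGdef]; ring
  clear_value W H G
  have hmg : 0 < m * g := mul_pos hm hg
  have hkey : 5 / 8 * (m * g) * (b - a) ≤ 2 * H 0 := by
    linarith [hG2, hGba, hHa, hHb, hVa, hVb]
  rw [div_mul_eq_mul_div, le_div_iff₀ (by positivity : (0:ℝ) < 5 * m * g)]
  linarith [hkey]
end
end

section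
/- Let m, g > 0 with m g ≥ 32, σ ∈ {+1, −1}, e₃ = (0,0,1), a ≤ 0 ≤ b, and let X, V : [a,b] → ℝ³ be differentiable with X'(s) = V̂(s) := V(s)/√(m² + ‖V(s)‖²) and V'(s) = σ(E(s) + V̂(s) × B(s)) − m g e₃, where ‖E(s)‖ ≤ m g/8 and ‖B(s)‖ ≤ m g/8 for all s ∈ [a,b], and X₃(a) = X₃(b) = 0 with X₃ ≥ 0 on [a,b]. Then for every β > 0 and every s ∈ [a,b], the Jüttner weight w_β(x,u) = exp(β(√(m² + ‖u‖²) + m g x₃) + (β/2)‖(x₁,x₂)‖) satisfies 1/w_β(X(s),V(s)) ≤ exp(−(β/2)√(m² + ‖V(0)‖²) − (β/2) m g·X₃(0) − (β/2)‖(X₁(0),X₂(0))‖). -/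
noncomputable section

local notation "⟪" x ", " y "⟫" => @inner ℝ _ _ x y

/-- The Jüttner-type weight
`w_β(x, u) = exp(β(√(m² + ‖u‖²) + m g x₃) + (β/2)‖(x₁,x₂)‖)`. -/
noncomputable def juttnerWeight (m g β : ℝ) (x u : EuclideanSpace ℝ (Fin 3)) : ℝ :=
  Real.exp (β * (Real.sqrt (m ^ 2 + ‖u‖ ^ 2) + m * g * x 2) +
    β / 2 * Real.sqrt (x 0 ^ 2 + x 1 ^ 2))

private lemma jw_norm_sq3 (v : EuclideanSpace ℝ (Fin 3)) :
    ‖v‖ ^ 2 = v 0 ^ 2 + v 1 ^ 2 + v 2 ^ 2 := by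
  rw [EuclideanSpace.norm_eq, Real.sq_sqrt (by positivity)]
  simp [Fin.sum_univ_three, Real.norm_eq_abs, sq_abs]

private lemma jw_inner3 (v w : EuclideanSpace ℝ (Fin 3)) :
    ⟪v, w⟫ = v 0 * w 0 + v 1 * w 1 + v 2 * w 2 := by
  simp [PiLp.inner_apply, Fin.sum_univ_three, RCLike.inner_apply, conj_trivial]
  ring

private lemma jw_abs_apply_le (v : EuclideanSpace ℝ (Fin 3)) (i : Fin 3) :
    |v i| ≤ ‖v‖ := by
  have h1 : v i ^ 2 ≤ ‖v‖ ^ 2 := by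
    rw [jw_norm_sq3]
    fin_cases i <;> simp <;> nlinarith [sq_nonneg (v 0), sq_nonneg (v 1), sq_nonneg (v 2)]
  have h2 := Real.sqrt_le_sqrt h1
  rwa [Real.sqrt_sq_eq_abs, Real.sqrt_sq (norm_nonneg v)] at h2

private lemma jw_cross_bound (v w : EuclideanSpace ℝ (Fin 3)) :
    |v 0 * w 1 - v 1 * w 0| ≤ ‖v‖ * ‖w‖ := by
  have hv := jw_norm_sq3 v
  have hw := jw_norm_sq3 w
  have h1 : (v 0 * w 1 - v 1 * w 0) ^ 2 ≤ (‖v‖ * ‖w‖) ^ 2 := by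
    have : (‖v‖ * ‖w‖) ^ 2 = ‖v‖ ^ 2 * ‖w‖ ^ 2 := by ring
    rw [this, hv, hw]
    nlinarith [sq_nonneg (v 0 * w 0 + v 1 * w 1), sq_nonneg (v 0 * w 2), sq_nonneg (v 1 * w 2),
      sq_nonneg (v 2 * w 0), sq_nonneg (v 2 * w 1), sq_nonneg (v 2 * w 2)]
  have h2 := Real.sqrt_le_sqrt h1
  rwa [Real.sqrt_sq_eq_abs,
    Real.sqrt_sq (mul_nonneg (norm_nonneg v) (norm_nonneg w))] at h2

private lemma jw_inner_cross (t : ℝ) (v w : EuclideanSpace ℝ (Fin 3)) :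
    ⟪v, cross3 (t • v) w⟫ = 0 := by
  rw [jw_inner3]
  simp [cross3, WithLp.equiv_symm_apply, PiLp.toLp_apply, PiLp.smul_apply, smul_eq_mul]
  ring

private noncomputable def planeProj : EuclideanSpace ℝ (Fin 3) →L[ℝ] EuclideanSpace ℝ (Fin 2) :=
  LinearMap.toContinuousLinearMap
    { toFun := fun v => (WithLp.equiv 2 (Fin 2 → ℝ)).symm ![v 0, v 1]
      map_add' := by
        intro v w; ext i; fin_cases i <;>
          simp [WithLp.equiv_symm_apply, PiLp.toLp_apply, PiLp.add_apply]
      map_smul' := by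
        intro t v; ext i; fin_cases i <;>
          simp [WithLp.equiv_symm_apply, PiLp.toLp_apply, PiLp.smul_apply] }

private lemma jw_planeProj_norm (v : EuclideanSpace ℝ (Fin 3)) :
    ‖planeProj v‖ = Real.sqrt (v 0 ^ 2 + v 1 ^ 2) := by
  rw [EuclideanSpace.norm_eq]
  congr 1
  simp [Fin.sum_univ_two, planeProj, WithLp.equiv_symm_apply, PiLp.toLp_apply, Real.norm_eq_abs, sq_abs]

private lemma jw_planeProj_norm_le (v : EuclideanSpace ℝ (Fin 3)) :
    ‖planeProj v‖ ≤ ‖v‖ := by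
  rw [jw_planeProj_norm]
  have h1 : v 0 ^ 2 + v 1 ^ 2 ≤ ‖v‖ ^ 2 := by
    rw [jw_norm_sq3]; nlinarith [sq_nonneg (v 2)]
  have h2 := Real.sqrt_le_sqrt h1
  rwa [Real.sqrt_sq (norm_nonneg v)] at h2

private lemma jw_sqrt_deriv (m : ℝ) (hm : 0 < m) (V : ℝ → EuclideanSpace ℝ (Fin 3))
    (w : EuclideanSpace ℝ (Fin 3)) (sS : Set ℝ) (t : ℝ)
    (h : HasDerivWithinAt V w sS t) :
    HasDerivWithinAt (fun u => Real.sqrt (m ^ 2 + ‖V u‖ ^ 2))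
      ((Real.sqrt (m ^ 2 + ‖V t‖ ^ 2))⁻¹ * ⟪V t, w⟫) sS t := by
  have hpos : (0:ℝ) < m ^ 2 + ⟪V t, V t⟫ := by
    rw [real_inner_self_eq_norm_sq]; positivity
  have hq : HasDerivWithinAt (fun u => m ^ 2 + ⟪V u, V u⟫) (⟪V t, w⟫ + ⟪w, V t⟫) sS t := by
    exact ((hasDerivWithinAt_const t sS (m ^ 2)).add (HasDerivWithinAt.inner ℝ h h)).congr_deriv
      (by simp)
  have h2 := hq.sqrt (ne_of_gt hpos)
  have heq : (fun u => Real.sqrt (m ^ 2 + ⟪V u, V u⟫)) =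
      fun u => Real.sqrt (m ^ 2 + ‖V u‖ ^ 2) := by
    funext u; rw [real_inner_self_eq_norm_sq]
  rw [heq] at h2
  convert h2 using 1
  rw [real_inner_comm w (V t), real_inner_self_eq_norm_sq]
  have hspos : (0:ℝ) < Real.sqrt (m ^ 2 + ‖V t‖ ^ 2) := Real.sqrt_pos.2 (by positivity)
  field_simp
  ring

private lemma jw_coord_deriv (X : ℝ → EuclideanSpace ℝ (Fin 3))
    (w : EuclideanSpace ℝ (Fin 3)) (sS : Set ℝ) (t : ℝ) (i : Fin 3)
    (h : HasDerivWithinAt X w sS t) :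
    HasDerivWithinAt (fun u => X u i) (w i) sS t := by
  exact (EuclideanSpace.proj i).hasFDerivAt.comp_hasDerivWithinAt t h

set_option maxHeartbeats 2000000 in
theorem juttner_weight_comparison
    (m g σ : ℝ) (hm : 0 < m) (hg : 0 < g) (hmg : 32 ≤ m * g) (hσ : σ = 1 ∨ σ = -1)
    (a b : ℝ) (ha : a ≤ 0) (hb : 0 ≤ b)
    (X V E B : ℝ → EuclideanSpace ℝ (Fin 3))
    (hX : ∀ s ∈ Set.Icc a b,
      HasDerivWithinAt X ((Real.sqrt (m ^ 2 + ‖V s‖ ^ 2))⁻¹ • V s) (Set.Icc a b) s)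
    (hV : ∀ s ∈ Set.Icc a b,
      HasDerivWithinAt V
        (σ • (E s + cross3 ((Real.sqrt (m ^ 2 + ‖V s‖ ^ 2))⁻¹ • V s) (B s)) -
          (m * g) • EuclideanSpace.single (2 : Fin 3) (1 : ℝ))
        (Set.Icc a b) s)
    (hE : ∀ s ∈ Set.Icc a b, ‖E s‖ ≤ m * g / 8)
    (hB : ∀ s ∈ Set.Icc a b, ‖B s‖ ≤ m * g / 8)
    (hXa : X a 2 = 0) (hXb : X b 2 = 0)
    (hX3 : ∀ s ∈ Set.Icc a b, 0 ≤ X s 2)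
    (β : ℝ) (hβ : 0 < β) (s : ℝ) (hs : s ∈ Set.Icc a b) :
    1 / juttnerWeight m g β (X s) (V s) ≤
      Real.exp (-(β / 2) * Real.sqrt (m ^ 2 + ‖V 0‖ ^ 2) - β / 2 * (m * g * X 0 2) -
        β / 2 * Real.sqrt (X 0 0 ^ 2 + X 0 1 ^ 2)) := by
  obtain ⟨hsa, hsb⟩ := hs
  have hab : a ≤ b := le_trans ha hb
  have h0m : (0:ℝ) ∈ Set.Icc a b := ⟨ha, hb⟩
  have hsm : s ∈ Set.Icc a b := ⟨hsa, hsb⟩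
  have hbm : b ∈ Set.Icc a b := ⟨hab, le_refl b⟩
  have ham : a ∈ Set.Icc a b := ⟨le_refl a, hab⟩
  have hmg0 : (0:ℝ) < m * g := mul_pos hm hg
  have hσ1 : |σ| = 1 := by rcases hσ with h | h <;> simp [h]
  have hqpos : ∀ t, (0:ℝ) < m ^ 2 + ‖V t‖ ^ 2 := fun t => by positivity
  have hγpos : ∀ t, 0 < Real.sqrt (m ^ 2 + ‖V t‖ ^ 2) := fun t => Real.sqrt_pos.2 (hqpos t)
  have hγsq : ∀ t, Real.sqrt (m ^ 2 + ‖V t‖ ^ 2) ^ 2 = m ^ 2 + ‖V t‖ ^ 2 :=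
    fun t => Real.sq_sqrt (hqpos t).le
  have hVγ : ∀ t, ‖V t‖ ≤ Real.sqrt (m ^ 2 + ‖V t‖ ^ 2) := fun t => by
    nlinarith [hγsq t, hγpos t, norm_nonneg (V t), sq_nonneg m]
  have hinv1 : ∀ t, (Real.sqrt (m ^ 2 + ‖V t‖ ^ 2))⁻¹ * ‖V t‖ ≤ 1 := fun t => by
    rw [inv_mul_le_iff₀ (hγpos t), mul_one]; exact hVγ t
  have hcnorm : ∀ t, ‖(Real.sqrt (m ^ 2 + ‖V t‖ ^ 2))⁻¹ • V t‖ ≤ 1 := fun t => by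
    rw [norm_smul, Real.norm_eq_abs, abs_of_pos (inv_pos.2 (hγpos t))]
    exact hinv1 t
  -- derivative of γ
  have hγd : ∀ t ∈ Set.Icc a b, HasDerivWithinAt (fun u => Real.sqrt (m ^ 2 + ‖V u‖ ^ 2))
      ((Real.sqrt (m ^ 2 + ‖V t‖ ^ 2))⁻¹ * (σ * ⟪V t, E t⟫ - m * g * V t 2))
      (Set.Icc a b) t := by
    intro t ht
    have base := jw_sqrt_deriv m hm V _ (Set.Icc a b) t (hV t ht)
    convert base using 2
    rw [inner_sub_right, real_inner_smul_right, real_inner_smul_right, inner_add_right,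
      jw_inner_cross]
    have hsing : ⟪V t, EuclideanSpace.single (2 : Fin 3) (1:ℝ)⟫ = V t 2 := by
      simp [EuclideanSpace.inner_single_right]
    rw [hsing]; ring
  -- derivative of X₃
  have hX3d : ∀ t ∈ Set.Icc a b, HasDerivWithinAt (fun u => X u 2)
      ((Real.sqrt (m ^ 2 + ‖V t‖ ^ 2))⁻¹ * V t 2) (Set.Icc a b) t := by
    intro t ht
    have := jw_coord_deriv X _ _ t 2 (hX t ht)
    simpa [PiLp.smul_apply, smul_eq_mul] using this
  -- derivative of V₃
  have hV3d : ∀ t ∈ Set.Icc a b, HasDerivWithinAt (fun u => V u 2)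
      (σ * (E t 2 + ((Real.sqrt (m ^ 2 + ‖V t‖ ^ 2))⁻¹ * V t 0 * B t 1 -
        (Real.sqrt (m ^ 2 + ‖V t‖ ^ 2))⁻¹ * V t 1 * B t 0)) - m * g)
      (Set.Icc a b) t := by
    intro t ht
    have h0 := jw_coord_deriv V _ _ t 2 (hV t ht)
    convert h0 using 1
    simp [cross3, WithLp.equiv_symm_apply, PiLp.toLp_apply, PiLp.sub_apply, PiLp.add_apply,
      PiLp.smul_apply, smul_eq_mul, EuclideanSpace.single_apply]
    ring
  -- bound for the inner-product field term
  have hip : ∀ t ∈ Set.Icc a b,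
      |(Real.sqrt (m ^ 2 + ‖V t‖ ^ 2))⁻¹ * ⟪V t, E t⟫| ≤ m * g / 8 := by
    intro t ht
    rw [abs_mul, abs_of_pos (inv_pos.2 (hγpos t))]
    calc (Real.sqrt (m ^ 2 + ‖V t‖ ^ 2))⁻¹ * |⟪V t, E t⟫|
        ≤ (Real.sqrt (m ^ 2 + ‖V t‖ ^ 2))⁻¹ * (‖V t‖ * ‖E t‖) :=
          mul_le_mul_of_nonneg_left (abs_real_inner_le_norm _ _)
            (inv_nonneg.2 (hγpos t).le)
      _ = ((Real.sqrt (m ^ 2 + ‖V t‖ ^ 2))⁻¹ * ‖V t‖) * ‖E t‖ := by ring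
      _ ≤ 1 * ‖E t‖ := mul_le_mul_of_nonneg_right (hinv1 t) (norm_nonneg _)
      _ = ‖E t‖ := one_mul _
      _ ≤ m * g / 8 := hE t ht
  -- bound for the horizontal cross term
  have hcr : ∀ t ∈ Set.Icc a b,
      |(Real.sqrt (m ^ 2 + ‖V t‖ ^ 2))⁻¹ * V t 0 * B t 1 -
        (Real.sqrt (m ^ 2 + ‖V t‖ ^ 2))⁻¹ * V t 1 * B t 0| ≤ m * g / 8 := by
    intro t ht
    have hrw : (Real.sqrt (m ^ 2 + ‖V t‖ ^ 2))⁻¹ * V t 0 * B t 1 -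
        (Real.sqrt (m ^ 2 + ‖V t‖ ^ 2))⁻¹ * V t 1 * B t 0 =
        ((Real.sqrt (m ^ 2 + ‖V t‖ ^ 2))⁻¹ • V t) 0 * B t 1 -
        ((Real.sqrt (m ^ 2 + ‖V t‖ ^ 2))⁻¹ • V t) 1 * B t 0 := by
      simp [PiLp.smul_apply, smul_eq_mul]
    rw [hrw]
    calc |((Real.sqrt (m ^ 2 + ‖V t‖ ^ 2))⁻¹ • V t) 0 * B t 1 -
          ((Real.sqrt (m ^ 2 + ‖V t‖ ^ 2))⁻¹ • V t) 1 * B t 0|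
        ≤ ‖(Real.sqrt (m ^ 2 + ‖V t‖ ^ 2))⁻¹ • V t‖ * ‖B t‖ := jw_cross_bound _ _
      _ ≤ 1 * (m * g / 8) := by
          apply mul_le_mul (hcnorm t) (hB t ht) (norm_nonneg _) zero_le_one
      _ = m * g / 8 := one_mul _
  -- the energy functional H = γ + m g X₃
  have hHd : ∀ t ∈ Set.Icc a b,
      HasDerivWithinAt (fun u => Real.sqrt (m ^ 2 + ‖V u‖ ^ 2) + m * g * X u 2)
        (σ * ((Real.sqrt (m ^ 2 + ‖V t‖ ^ 2))⁻¹ * ⟪V t, E t⟫)) (Set.Icc a b) t := by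
    intro t ht
    have := (hγd t ht).add ((hX3d t ht).const_mul (m * g))
    exact this.congr_deriv (by ring)
  have hHb : ∀ t ∈ Set.Icc a b,
      ‖σ * ((Real.sqrt (m ^ 2 + ‖V t‖ ^ 2))⁻¹ * ⟪V t, E t⟫)‖ ≤ m * g / 8 := by
    intro t ht
    rw [Real.norm_eq_abs, abs_mul, hσ1, one_mul]
    exact hip t ht
  have hHmvt : |(Real.sqrt (m ^ 2 + ‖V s‖ ^ 2) + m * g * X s 2) -
      (Real.sqrt (m ^ 2 + ‖V 0‖ ^ 2) + m * g * X 0 2)| ≤ m * g / 8 * |s| := by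
    have := Convex.norm_image_sub_le_of_norm_hasDerivWithin_le hHd hHb (convex_Icc a b) h0m hsm
    simpa [Real.norm_eq_abs] using this
  -- the functional Φ for the forward travel-time bound
  have hΦd : ∀ t ∈ Set.Icc a b,
      HasDerivWithinAt
        (fun u => m * g * X u 2 + m * g * u + Real.sqrt (m ^ 2 + ‖V u‖ ^ 2) + V u 2)
        (σ * ((Real.sqrt (m ^ 2 + ‖V t‖ ^ 2))⁻¹ * ⟪V t, E t⟫ +
          (E t 2 + ((Real.sqrt (m ^ 2 + ‖V t‖ ^ 2))⁻¹ * V t 0 * B t 1 -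
            (Real.sqrt (m ^ 2 + ‖V t‖ ^ 2))⁻¹ * V t 1 * B t 0)))) (Set.Icc a b) t := by
    intro t ht
    have h2 : HasDerivWithinAt (fun u : ℝ => m * g * u) (m * g * 1) (Set.Icc a b) t :=
      (hasDerivWithinAt_id t _).const_mul (m * g)
    have := ((((hX3d t ht).const_mul (m * g)).add h2).add (hγd t ht)).add (hV3d t ht)
    exact this.congr_deriv (by ring)
  have hΦb : ∀ t ∈ Set.Icc a b,
      ‖σ * ((Real.sqrt (m ^ 2 + ‖V t‖ ^ 2))⁻¹ * ⟪V t, E t⟫ +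
        (E t 2 + ((Real.sqrt (m ^ 2 + ‖V t‖ ^ 2))⁻¹ * V t 0 * B t 1 -
          (Real.sqrt (m ^ 2 + ‖V t‖ ^ 2))⁻¹ * V t 1 * B t 0)))‖ ≤ 3 * (m * g) / 8 := by
    intro t ht
    rw [Real.norm_eq_abs, abs_mul, hσ1, one_mul]
    have e1 := hip t ht
    have e2 : |E t 2| ≤ m * g / 8 := (jw_abs_apply_le (E t) 2).trans (hE t ht)
    have e3 := hcr t ht
    calc |(Real.sqrt (m ^ 2 + ‖V t‖ ^ 2))⁻¹ * ⟪V t, E t⟫ +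
          (E t 2 + ((Real.sqrt (m ^ 2 + ‖V t‖ ^ 2))⁻¹ * V t 0 * B t 1 -
            (Real.sqrt (m ^ 2 + ‖V t‖ ^ 2))⁻¹ * V t 1 * B t 0))|
        ≤ |(Real.sqrt (m ^ 2 + ‖V t‖ ^ 2))⁻¹ * ⟪V t, E t⟫| +
          (|E t 2| + |(Real.sqrt (m ^ 2 + ‖V t‖ ^ 2))⁻¹ * V t 0 * B t 1 -
            (Real.sqrt (m ^ 2 + ‖V t‖ ^ 2))⁻¹ * V t 1 * B t 0|) :=
          (abs_add_le _ _).trans (by gcongr; exact abs_add_le _ _)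
      _ ≤ m * g / 8 + (m * g / 8 + m * g / 8) := by gcongr
      _ = 3 * (m * g) / 8 := by ring
  -- the functional Ψ for the backward travel-time bound
  have hΨd : ∀ t ∈ Set.Icc a b,
      HasDerivWithinAt
        (fun u => m * g * X u 2 - m * g * u + Real.sqrt (m ^ 2 + ‖V u‖ ^ 2) - V u 2)
        (σ * ((Real.sqrt (m ^ 2 + ‖V t‖ ^ 2))⁻¹ * ⟪V t, E t⟫ -
          (E t 2 + ((Real.sqrt (m ^ 2 + ‖V t‖ ^ 2))⁻¹ * V t 0 * B t 1 -
            (Real.sqrt (m ^ 2 + ‖V t‖ ^ 2))⁻¹ * V t 1 * B t 0)))) (Set.Icc a b) t := by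
    intro t ht
    have h2 : HasDerivWithinAt (fun u : ℝ => m * g * u) (m * g * 1) (Set.Icc a b) t :=
      (hasDerivWithinAt_id t _).const_mul (m * g)
    have := ((((hX3d t ht).const_mul (m * g)).sub h2).add (hγd t ht)).sub (hV3d t ht)
    exact this.congr_deriv (by ring)
  have hΨb : ∀ t ∈ Set.Icc a b,
      ‖σ * ((Real.sqrt (m ^ 2 + ‖V t‖ ^ 2))⁻¹ * ⟪V t, E t⟫ -
        (E t 2 + ((Real.sqrt (m ^ 2 + ‖V t‖ ^ 2))⁻¹ * V t 0 * B t 1 -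
          (Real.sqrt (m ^ 2 + ‖V t‖ ^ 2))⁻¹ * V t 1 * B t 0)))‖ ≤ 3 * (m * g) / 8 := by
    intro t ht
    rw [Real.norm_eq_abs, abs_mul, hσ1, one_mul]
    have e1 := hip t ht
    have e2 : |E t 2| ≤ m * g / 8 := (jw_abs_apply_le (E t) 2).trans (hE t ht)
    have e3 := hcr t ht
    calc |(Real.sqrt (m ^ 2 + ‖V t‖ ^ 2))⁻¹ * ⟪V t, E t⟫ -
          (E t 2 + ((Real.sqrt (m ^ 2 + ‖V t‖ ^ 2))⁻¹ * V t 0 * B t 1 -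
            (Real.sqrt (m ^ 2 + ‖V t‖ ^ 2))⁻¹ * V t 1 * B t 0))|
        ≤ |(Real.sqrt (m ^ 2 + ‖V t‖ ^ 2))⁻¹ * ⟪V t, E t⟫| +
          (|E t 2| + |(Real.sqrt (m ^ 2 + ‖V t‖ ^ 2))⁻¹ * V t 0 * B t 1 -
            (Real.sqrt (m ^ 2 + ‖V t‖ ^ 2))⁻¹ * V t 1 * B t 0|) :=
          (abs_sub _ _).trans (by gcongr; exact abs_add_le _ _)
      _ ≤ m * g / 8 + (m * g / 8 + m * g / 8) := by gcongr
      _ = 3 * (m * g) / 8 := by ring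
  -- shorthand
  set H0 : ℝ := Real.sqrt (m ^ 2 + ‖V 0‖ ^ 2) + m * g * X 0 2 with hH0def
  have hH0nn : 0 ≤ H0 := by
    have := hγpos 0
    have := hX3 0 h0m
    nlinarith
  -- |V t 2| ≤ γ t
  have hV3γ : ∀ t, |V t 2| ≤ Real.sqrt (m ^ 2 + ‖V t‖ ^ 2) :=
    fun t => (jw_abs_apply_le (V t) 2).trans (hVγ t)
  -- forward travel-time bound: m g b ≤ (16/5) H0
  have hbbd : m * g * b ≤ 16 / 5 * H0 := by
    have hmvt := Convex.norm_image_sub_le_of_norm_hasDerivWithin_le hΦd hΦb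
      (convex_Icc a b) h0m hbm
    rw [Real.norm_eq_abs, Real.norm_eq_abs, sub_zero, abs_of_nonneg hb] at hmvt
    have hΦb' : m * g * X b 2 + m * g * b + Real.sqrt (m ^ 2 + ‖V b‖ ^ 2) + V b 2 -
        (m * g * X 0 2 + m * g * 0 + Real.sqrt (m ^ 2 + ‖V 0‖ ^ 2) + V 0 2) ≤
        3 * (m * g) / 8 * b := (le_abs_self _).trans hmvt
    have h1 := hV3γ b
    have h2 := hV3γ 0
    have h3 := hX3 0 h0m
    rw [hXb] at hΦb'
    rw [abs_le] at h1 h2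
    nlinarith [hγpos b, hγpos 0]
  -- backward travel-time bound: m g (-a) ≤ (16/5) H0
  have habd : m * g * (-a) ≤ 16 / 5 * H0 := by
    have hmvt := Convex.norm_image_sub_le_of_norm_hasDerivWithin_le hΨd hΨb
      (convex_Icc a b) h0m ham
    rw [Real.norm_eq_abs, Real.norm_eq_abs, sub_zero, abs_of_nonpos ha] at hmvt
    have hΨb' : m * g * X a 2 - m * g * a + Real.sqrt (m ^ 2 + ‖V a‖ ^ 2) - V a 2 -
        (m * g * X 0 2 - m * g * 0 + Real.sqrt (m ^ 2 + ‖V 0‖ ^ 2) - V 0 2) ≤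
        3 * (m * g) / 8 * (-a) := (le_abs_self _).trans hmvt
    have h1 := hV3γ a
    have h2 := hV3γ 0
    have h3 := hX3 0 h0m
    rw [hXa] at hΨb'
    rw [abs_le] at h1 h2
    nlinarith [hγpos a, hγpos 0]
  have hsbd : m * g * |s| ≤ 16 / 5 * H0 := by
    rcases le_or_gt 0 s with h | h
    · rw [abs_of_nonneg h]
      calc m * g * s ≤ m * g * b := by nlinarith
        _ ≤ 16 / 5 * H0 := hbbd
    · rw [abs_of_neg h]
      calc m * g * (-s) ≤ m * g * (-a) := by nlinarith
        _ ≤ 16 / 5 * H0 := habd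
  -- the horizontal Lipschitz bound
  have hPl : Real.sqrt (X 0 0 ^ 2 + X 0 1 ^ 2) ≤ Real.sqrt (X s 0 ^ 2 + X s 1 ^ 2) + |s| := by
    have hYd : ∀ t ∈ Set.Icc a b,
        HasDerivWithinAt (fun u => planeProj (X u))
          (planeProj ((Real.sqrt (m ^ 2 + ‖V t‖ ^ 2))⁻¹ • V t)) (Set.Icc a b) t :=
      fun t ht => planeProj.hasFDerivAt.comp_hasDerivWithinAt t (hX t ht)
    have hYb : ∀ t ∈ Set.Icc a b,
        ‖planeProj ((Real.sqrt (m ^ 2 + ‖V t‖ ^ 2))⁻¹ • V t)‖ ≤ 1 :=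
      fun t _ => (jw_planeProj_norm_le _).trans (hcnorm t)
    have hmvt := Convex.norm_image_sub_le_of_norm_hasDerivWithin_le hYd hYb
      (convex_Icc a b) hsm h0m
    simp only [Real.norm_eq_abs, zero_sub, abs_neg, one_mul] at hmvt
    have h2 := norm_sub_norm_le (planeProj (X 0)) (planeProj (X s))
    rw [jw_planeProj_norm, jw_planeProj_norm] at h2
    have h3 : ‖planeProj (X 0) - planeProj (X s)‖ ≤ |s| := hmvt
    linarith
  -- combine everything
  have key : H0 + Real.sqrt (X 0 0 ^ 2 + X 0 1 ^ 2) ≤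
      2 * (Real.sqrt (m ^ 2 + ‖V s‖ ^ 2) + m * g * X s 2) +
      Real.sqrt (X s 0 ^ 2 + X s 1 ^ 2) := by
    have h1 := abs_le.1 hHmvt
    have h32 : (0:ℝ) ≤ (m * g - 32) * |s| :=
      mul_nonneg (by linarith) (abs_nonneg s)
    nlinarith [h1.1, hPl, hsbd, hH0nn, abs_nonneg s]
  rw [hH0def] at key
  simp only [juttnerWeight]
  rw [one_div, ← Real.exp_neg, Real.exp_le_exp]
  have hfin := mul_le_mul_of_nonneg_left key (by positivity : (0:ℝ) ≤ β / 2)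
  nlinarith [hfin]
end
end

section
/- Let K ≥ 0 and let a : ℝ → ℝ be differentiable with a(s) ≥ 0 and |a'(s)| ≤ K·a(s) for all s ∈ ℝ. Define ã(s) = √(a(s)/(1 + a(s))). Then for all s, t ∈ ℝ: e^{−(K/2)|t−s|}·ã(t) ≤ ã(s) ≤ e^{(K/2)|t−s|}·ã(t). -/
/-- Abstract velocity lemma.  If `a : ℝ → ℝ` is differentiable with
`a(s) ≥ 0` and `|a'(s)| ≤ K·a(s)` for all `s` (where `K ≥ 0`), then the normalized weight
`ã(s) = √(a(s)/(1 + a(s)))` satisfies, for all `s, t`,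
`e^{−(K/2)|t−s|}·ã(t) ≤ ã(s) ≤ e^{(K/2)|t−s|}·ã(t)`. -/
theorem velocity_lemma_abstract
    (K : ℝ) (hK : 0 ≤ K) (a : ℝ → ℝ) (ha : Differentiable ℝ a)
    (hpos : ∀ s, 0 ≤ a s) (hder : ∀ s, |deriv a s| ≤ K * a s) :
    ∀ s t : ℝ,
      Real.exp (-(K / 2) * |t - s|) * Real.sqrt (a t / (1 + a t)) ≤
          Real.sqrt (a s / (1 + a s)) ∧
        Real.sqrt (a s / (1 + a s)) ≤
          Real.exp (K / 2 * |t - s|) * Real.sqrt (a t / (1 + a t)) := by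
  have hpos1 : ∀ s : ℝ, (0:ℝ) < 1 + a s := fun s => by linarith [hpos s]
  have hexp : ∀ (c x : ℝ), HasDerivAt (fun y => Real.exp (c * y)) (c * Real.exp (c * x)) x := by
    intro c x
    simpa [mul_comm] using (((hasDerivAt_id x).const_mul c).exp)
  have hg : ∀ x : ℝ, HasDerivAt (fun y => a y * Real.exp (K * y))
      (deriv a x * Real.exp (K * x) + a x * (K * Real.exp (K * x))) x :=
    fun x => ((ha x).hasDerivAt).mul (hexp K x)
  have hg' : ∀ x : ℝ, HasDerivAt (fun y => a y * Real.exp (-K * y))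
      (deriv a x * Real.exp (-K * x) + a x * (-K * Real.exp (-K * x))) x :=
    fun x => ((ha x).hasDerivAt).mul (hexp (-K) x)
  have hmono : Monotone (fun x => a x * Real.exp (K * x)) := by
    apply monotone_of_deriv_nonneg
    · exact fun x => (hg x).differentiableAt
    · intro x
      rw [(hg x).deriv]
      have h1 := (abs_le.mp (hder x)).1
      nlinarith [Real.exp_pos (K * x), hpos x]
  have hanti : Antitone (fun x => a x * Real.exp (-K * x)) := by
    apply antitone_of_deriv_nonpos
    · exact fun x => (hg' x).differentiableAt
    · intro x
      rw [(hg' x).deriv]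
      have h1 := (abs_le.mp (hder x)).2
      nlinarith [Real.exp_pos (-K * x), hpos x]
  have key : ∀ s t : ℝ, a s ≤ Real.exp (K * |s - t|) * a t := by
    intro s t
    rcases le_total s t with h | h
    · rw [abs_of_nonpos (by linarith)]
      have h2 : a s * Real.exp (K * s) ≤ a t * Real.exp (K * t) := hmono h
      have h4 := mul_le_mul_of_nonneg_right h2 (Real.exp_pos (-(K * s))).le
      have h5 : Real.exp (K * s) * Real.exp (-(K * s)) = 1 := by
        rw [← Real.exp_add]; simp
      have h6 : Real.exp (K * t) * Real.exp (-(K * s)) = Real.exp (K * -(s - t)) := by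
        rw [← Real.exp_add]; ring_nf
      calc a s = a s * (Real.exp (K * s) * Real.exp (-(K * s))) := by rw [h5]; ring
        _ ≤ a t * (Real.exp (K * t) * Real.exp (-(K * s))) := by
            rw [← mul_assoc, ← mul_assoc]; exact h4
        _ = Real.exp (K * -(s - t)) * a t := by rw [h6]; ring
    · rw [abs_of_nonneg (by linarith)]
      have h2 : a t * Real.exp (-K * t) ≥ a s * Real.exp (-K * s) := hanti h
      have h4 := mul_le_mul_of_nonneg_right h2 (Real.exp_pos (K * s)).le
      have h5 : Real.exp (-K * s) * Real.exp (K * s) = 1 := by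
        rw [← Real.exp_add]; ring_nf; simp
      have h6 : Real.exp (-K * t) * Real.exp (K * s) = Real.exp (K * (s - t)) := by
        rw [← Real.exp_add]; ring_nf
      calc a s = a s * (Real.exp (-K * s) * Real.exp (K * s)) := by rw [h5]; ring
        _ ≤ a t * (Real.exp (-K * t) * Real.exp (K * s)) := by
            rw [← mul_assoc, ← mul_assoc]; exact h4
        _ = Real.exp (K * (s - t)) * a t := by rw [h6]; ring
  have key2 : ∀ s t : ℝ, a s / (1 + a s) ≤ Real.exp (K * |s - t|) * (a t / (1 + a t)) := by
    intro s t
    have h1 := key s t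
    have hs := hpos s
    have ht := hpos t
    have hl : (1:ℝ) ≤ Real.exp (K * |s - t|) := Real.one_le_exp (by positivity)
    rw [mul_div_assoc', div_le_div_iff₀ (hpos1 s) (hpos1 t)]
    nlinarith [mul_nonneg (sub_nonneg.mpr hl) (mul_nonneg hs ht)]
  -- sqrt version
  have key3 : ∀ s t : ℝ, Real.sqrt (a s / (1 + a s)) ≤
      Real.exp (K / 2 * |s - t|) * Real.sqrt (a t / (1 + a t)) := by
    intro s t
    have h1 := Real.sqrt_le_sqrt (key2 s t)
    have hsq : Real.sqrt (Real.exp (K * |s - t|)) = Real.exp (K / 2 * |s - t|) := by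
      rw [show K * |s - t| = K / 2 * |s - t| + K / 2 * |s - t| by ring, Real.exp_add,
        Real.sqrt_mul_self (Real.exp_pos _).le]
    rwa [Real.sqrt_mul (Real.exp_pos _).le, hsq] at h1
  intro s t
  constructor
  · have h1 := key3 t s
    have h2 := mul_le_mul_of_nonneg_left h1 (Real.exp_pos (-(K / 2) * |t - s|)).le
    calc Real.exp (-(K / 2) * |t - s|) * Real.sqrt (a t / (1 + a t))
        ≤ Real.exp (-(K / 2) * |t - s|) *
            (Real.exp (K / 2 * |t - s|) * Real.sqrt (a s / (1 + a s))) := h2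
      _ = Real.exp (-(K / 2) * |t - s| + K / 2 * |t - s|) * Real.sqrt (a s / (1 + a s)) := by
          rw [Real.exp_add]; ring
      _ = Real.sqrt (a s / (1 + a s)) := by norm_num
  · have h1 := key3 s t
    rwa [abs_sub_comm s t] at h1
end
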